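/- arXiv:2002.11875 — 3 statements merged into one kernel-verified Lean document; each statement's English description precedes it below -/
import Mathlib

section
/- Let f : ℝ^n × ℝ^m → ℝ be continuously differentiable, with f(·,y) convex for every y ∈ ℝ^m and f(x,·) concave for every x ∈ ℝ^n. Then for any (x,y) ∈ ℝ^n × ℝ^m the following are equivalent: (a) (x,y) is a local minimax point of f; (b) (x,y) is stationary, i.e. ∂_x f(x,y) = 0 and ∂_y f(x,y) = 0; (c) (x,y) is a global saddle point of f. Moreover, each of these conditions implies that (x,y) is a global minimax point of f. -/
open Filter

/-- Local upper envelope `f̄_{ε,y*}` (unconstrained case), in the extended reals. -/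
noncomputable def envU {n m : ℕ}
    (f : EuclideanSpace ℝ (Fin n) → EuclideanSpace ℝ (Fin m) → ℝ)
    (ystar : EuclideanSpace ℝ (Fin m)) (ε : ℝ)
    (x : EuclideanSpace ℝ (Fin n)) : EReal :=
  ⨆ y ∈ {y : EuclideanSpace ℝ (Fin m) | ‖y - ystar‖ ≤ ε}, ((f x y : ℝ) : EReal)

/-- `(x*, y*)` is a local minimax point of `f` (unconstrained case). -/
def IsLocalMinimax {n m : ℕ}
    (f : EuclideanSpace ℝ (Fin n) → EuclideanSpace ℝ (Fin m) → ℝ)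
    (xstar : EuclideanSpace ℝ (Fin n)) (ystar : EuclideanSpace ℝ (Fin m)) : Prop :=
  (∃ ε > (0 : ℝ), ∀ y, ‖y - ystar‖ ≤ ε → f xstar y ≤ f xstar ystar) ∧
  (∃ εseq : ℕ → ℝ, (∀ k, 0 < εseq k) ∧ Tendsto εseq atTop (nhds 0) ∧
    ∀ k, ∃ δ > (0 : ℝ), ∀ x, ‖x - xstar‖ ≤ δ →
      envU f ystar (εseq k) xstar ≤ envU f ystar (εseq k) x)

/-- `(xs, ys)` is a global saddle point of `f` (unconstrained case). -/
def IsGlobalSaddle {n m : ℕ}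
    (f : EuclideanSpace ℝ (Fin n) → EuclideanSpace ℝ (Fin m) → ℝ)
    (xs : EuclideanSpace ℝ (Fin n)) (ys : EuclideanSpace ℝ (Fin m)) : Prop :=
  (∀ y, f xs y ≤ f xs ys) ∧ (∀ x, f xs ys ≤ f x ys)

/-- `(xs, ys)` is a global minimax point of `f` (unconstrained case). -/
def IsGlobalMinimax {n m : ℕ}
    (f : EuclideanSpace ℝ (Fin n) → EuclideanSpace ℝ (Fin m) → ℝ)
    (xs : EuclideanSpace ℝ (Fin n)) (ys : EuclideanSpace ℝ (Fin m)) : Prop :=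
  (∀ y, f xs y ≤ f xs ys) ∧
  (∀ x, ∀ c : ℝ, (∀ y, f x y ≤ c) → f xs ys ≤ c)

/-- `(x, y)` is a stationary point of `f`: both partial gradients vanish. -/
def IsStationaryPair {n m : ℕ}
    (f : EuclideanSpace ℝ (Fin n) → EuclideanSpace ℝ (Fin m) → ℝ)
    (x : EuclideanSpace ℝ (Fin n)) (y : EuclideanSpace ℝ (Fin m)) : Prop :=
  gradient (fun x' => f x' y) x = 0 ∧ gradient (fun y' => f x y') y = 0

/-- Subgradient inequality for differentiable convex functions. -/
lemma subgrad_ineq {E : Type*} [NormedAddCommGroup E] [NormedSpace ℝ E]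
    {g : E → ℝ} (hg : ConvexOn ℝ Set.univ g) {L : E →L[ℝ] ℝ} {b : E}
    (hL : HasFDerivAt g L b) (a : E) : g b + L (a - b) ≤ g a := by
  set γ : ℝ →ᵃ[ℝ] E := AffineMap.lineMap b a with hγ
  have hb : γ (0 : ℝ) = b := AffineMap.lineMap_apply_zero b a
  have h1 : γ (1 : ℝ) = a := AffineMap.lineMap_apply_one b a
  have hφ : ConvexOn ℝ Set.univ (g ∘ γ) := by
    simpa using hg.comp_affineMap γ
  have hline : HasDerivAt (fun t : ℝ => γ t) (a - b) 0 := by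
    have h2 : HasDerivAt (fun t : ℝ => t • (a - b) + b) ((1 : ℝ) • (a - b)) 0 :=
      ((hasDerivAt_id (0 : ℝ)).smul_const (a - b)).add_const b
    simpa [hγ, AffineMap.lineMap_apply_module'] using h2
  have hL' : HasFDerivAt g L (γ (0 : ℝ)) := by rw [hb]; exact hL
  have hcomp : HasDerivAt (g ∘ γ) (L (a - b)) 0 := hL'.comp_hasDerivAt 0 hline
  have hs := hφ.le_slope_of_hasDerivAt (Set.mem_univ (0 : ℝ)) (Set.mem_univ (1 : ℝ))
    one_pos hcomp
  have hslope : slope (g ∘ γ) 0 1 = g a - g b := by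
    simp [slope, h1, hb]
  rw [hslope] at hs
  linarith

lemma envU_le {n m : ℕ} {f : EuclideanSpace ℝ (Fin n) → EuclideanSpace ℝ (Fin m) → ℝ}
    {ystar : EuclideanSpace ℝ (Fin m)} {ε : ℝ} {x : EuclideanSpace ℝ (Fin n)} {c : ℝ}
    (h : ∀ y, ‖y - ystar‖ ≤ ε → f x y ≤ c) : envU f ystar ε x ≤ (c : EReal) := by
  refine iSup₂_le fun y hy => ?_
  exact_mod_cast h y hy

lemma le_envU {n m : ℕ} {f : EuclideanSpace ℝ (Fin n) → EuclideanSpace ℝ (Fin m) → ℝ}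
    {ystar : EuclideanSpace ℝ (Fin m)} {ε : ℝ} {x : EuclideanSpace ℝ (Fin n)}
    {y : EuclideanSpace ℝ (Fin m)} (hy : ‖y - ystar‖ ≤ ε) :
    ((f x y : ℝ) : EReal) ≤ envU f ystar ε x :=
  le_iSup₂ (f := fun y _ => ((f x y : ℝ) : EReal)) y hy

/-- For a continuously differentiable convex-concave function, local minimax,
stationarity and global saddle are all equivalent; each implies global minimax. -/
theorem convexConcave_localMinimax_iff_stationary_iff_saddle {n m : ℕ}
    (f : EuclideanSpace ℝ (Fin n) → EuclideanSpace ℝ (Fin m) → ℝ)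
    (hf : ContDiff ℝ 1 (fun p : EuclideanSpace ℝ (Fin n) × EuclideanSpace ℝ (Fin m) => f p.1 p.2))
    (hconv : ∀ y, ConvexOn ℝ Set.univ (fun x => f x y))
    (hconc : ∀ x, ConcaveOn ℝ Set.univ (fun y => f x y))
    (x : EuclideanSpace ℝ (Fin n)) (y : EuclideanSpace ℝ (Fin m)) :
    (IsLocalMinimax f x y ↔ IsStationaryPair f x y) ∧
    (IsStationaryPair f x y ↔ IsGlobalSaddle f x y) ∧
    (IsLocalMinimax f x y → IsGlobalMinimax f x y) := by
  set F : EuclideanSpace ℝ (Fin n) × EuclideanSpace ℝ (Fin m) → ℝ :=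
    fun p => f p.1 p.2 with hFdef
  have hFd : Differentiable ℝ F := hf.differentiable one_ne_zero
  have hx_fd : ∀ (a : EuclideanSpace ℝ (Fin n)) (b : EuclideanSpace ℝ (Fin m)),
      HasFDerivAt (fun x' => f x' b)
        ((fderiv ℝ F (a, b)).comp (ContinuousLinearMap.inl ℝ _ _)) a :=
    fun a b => by have := ((hFd (a, b)).hasFDerivAt).comp a (hasFDerivAt_prodMk_left (𝕜 := ℝ) a b); exact this
  have hy_fd : ∀ (a : EuclideanSpace ℝ (Fin n)) (b : EuclideanSpace ℝ (Fin m)),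
      HasFDerivAt (fun y' => f a y')
        ((fderiv ℝ F (a, b)).comp (ContinuousLinearMap.inr ℝ _ _)) b :=
    fun a b => by have := ((hFd (a, b)).hasFDerivAt).comp b (hasFDerivAt_prodMk_right (𝕜 := ℝ) a b); exact this
  have hgradx : ∀ (a : EuclideanSpace ℝ (Fin n)) (b : EuclideanSpace ℝ (Fin m)),
      HasGradientAt (fun x' => f x' b)
        ((InnerProductSpace.toDual ℝ _).symm
          ((fderiv ℝ F (a, b)).comp (ContinuousLinearMap.inl ℝ _ _))) a := by
    intro a b
    rw [hasGradientAt_iff_hasFDerivAt]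
    simpa using hx_fd a b
  have hgrady : ∀ (a : EuclideanSpace ℝ (Fin n)) (b : EuclideanSpace ℝ (Fin m)),
      HasGradientAt (fun y' => f a y')
        ((InnerProductSpace.toDual ℝ _).symm
          ((fderiv ℝ F (a, b)).comp (ContinuousLinearMap.inr ℝ _ _))) b := by
    intro a b
    rw [hasGradientAt_iff_hasFDerivAt]
    simpa using hy_fd a b
  -- Stationary → Saddle
  have StoSad : IsStationaryPair f x y → IsGlobalSaddle f x y := by
    rintro ⟨hgx, hgy⟩
    have hLx0 : (fderiv ℝ F (x, y)).comp (ContinuousLinearMap.inl ℝ _ _) = 0 := by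
      have h := (hgradx x y).gradient
      rw [hgx] at h
      simpa using congrArg (InnerProductSpace.toDual ℝ _) h.symm
    have hLy0 : (fderiv ℝ F (x, y)).comp (ContinuousLinearMap.inr ℝ _ _) = 0 := by
      have h := (hgrady x y).gradient
      rw [hgy] at h
      simpa using congrArg (InnerProductSpace.toDual ℝ _) h.symm
    constructor
    · intro y'
      have hneg : ConvexOn ℝ Set.univ (fun y' => -(f x y')) := by
        simpa [Pi.neg_def] using (hconc x).neg
      have hd : HasFDerivAt (fun y' => -(f x y'))
          (-((fderiv ℝ F (x, y)).comp (ContinuousLinearMap.inr ℝ _ _))) y :=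
        (hy_fd x y).neg
      have := subgrad_ineq hneg hd y'
      rw [hLy0] at this
      simpa using this
    · intro x'
      have := subgrad_ineq (hconv y) (hx_fd x y) x'
      rw [hLx0] at this
      simpa using this
  -- Saddle → Local minimax
  have SadToL : IsGlobalSaddle f x y → IsLocalMinimax f x y := by
    rintro ⟨h1, h2⟩
    refine ⟨⟨1, one_pos, fun y' _ => h1 y'⟩,
      ⟨fun k => 1 / (k + 1 : ℝ), fun k => by positivity,
        tendsto_one_div_add_atTop_nhds_zero_nat, fun k => ⟨1, one_pos, fun x' _ => ?_⟩⟩⟩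
    calc envU f y (1 / (k + 1 : ℝ)) x ≤ ((f x y : ℝ) : EReal) := envU_le fun y' _ => h1 y'
      _ ≤ ((f x' y : ℝ) : EReal) := by exact_mod_cast h2 x'
      _ ≤ envU f y (1 / (k + 1 : ℝ)) x' := le_envU (by simp; positivity)
  -- Local minimax → Stationary
  have LtoS : IsLocalMinimax f x y → IsStationaryPair f x y := by
    rintro ⟨⟨ε, hε, hymax⟩, εs, hεpos, hεto0, hloc⟩
    have hgy0 : gradient (fun y' => f x y') y = 0 := by
      have hmax : IsLocalMax (fun y' => f x y') y := by
        have hmem : Metric.closedBall y ε ∈ nhds y := Metric.closedBall_mem_nhds y hε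
        exact Filter.eventually_of_mem hmem fun y' hy' =>
          hymax y' (by simpa [dist_eq_norm] using hy')
      have h0 : (fderiv ℝ F (x, y)).comp (ContinuousLinearMap.inr ℝ _ _) = 0 :=
        hmax.hasFDerivAt_eq_zero (hy_fd x y)
      rw [(hgrady x y).gradient, h0, map_zero]
    refine ⟨?_, hgy0⟩
    by_contra hg
    set g := gradient (fun x' => f x' y) x with hgdef
    have hgnorm : 0 < ‖g‖ := norm_pos_iff.mpr hg
    set c : ℝ := ‖g‖ ^ 2 with hcdef
    have hc : 0 < c := by positivity
    set Φ : EuclideanSpace ℝ (Fin n) × EuclideanSpace ℝ (Fin m) → ℝ :=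
      fun p => fderiv ℝ F p (g, (0 : EuclideanSpace ℝ (Fin m))) with hΦdef
    have hΦapp : ∀ (a : EuclideanSpace ℝ (Fin n)) (b : EuclideanSpace ℝ (Fin m)),
        ((fderiv ℝ F (a, b)).comp (ContinuousLinearMap.inl ℝ _ _)) g = Φ (a, b) := by
      intro a b; simp [hΦdef]
    have hgx : g = (InnerProductSpace.toDual ℝ _).symm
        ((fderiv ℝ F (x, y)).comp (ContinuousLinearMap.inl ℝ _ _)) :=
      hgdef.trans ((hgradx x y).gradient)
    have hΦxy : Φ (x, y) = c := by
      rw [← hΦapp x y]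
      have h2 : (fderiv ℝ F (x, y)).comp (ContinuousLinearMap.inl ℝ _ _)
          = InnerProductSpace.toDual ℝ _ g := by
        rw [hgx]; simp
      rw [h2, InnerProductSpace.toDual_apply_apply, real_inner_self_eq_norm_sq]
    have hΦc : ContinuousAt Φ (x, y) :=
      ((hf.continuous_fderiv one_ne_zero).clm_apply continuous_const).continuousAt
    have hev : ∀ᶠ p in nhds (x, y), c / 2 < Φ p :=
      hΦc.eventually (by rw [hΦxy]; exact eventually_gt_nhds (by linarith))
    rw [Metric.eventually_nhds_iff] at hev
    obtain ⟨r, hr, hball⟩ := hev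
    have hr2 : 0 < r / 2 := by linarith
    obtain ⟨k, hk⟩ := (hεto0.eventually (eventually_lt_nhds (lt_min hε hr2))).exists
    obtain ⟨δ, hδ, hmin⟩ := hloc k
    set t : ℝ := min δ (r / 2) / ‖g‖ with htdef
    have ht0 : 0 < t := div_pos (lt_min hδ hr2) hgnorm
    set xt := x - t • g with hxtdef
    have hxtnorm : ‖xt - x‖ = min δ (r / 2) := by
      rw [hxtdef]
      rw [show x - t • g - x = -(t • g) by abel]
      rw [norm_neg, norm_smul, Real.norm_eq_abs, abs_of_pos ht0, htdef]
      field_simp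
    have h1 : envU f y (εs k) x ≤ envU f y (εs k) xt :=
      hmin xt (by rw [hxtnorm]; exact min_le_left _ _)
    have h2 : ((f x y : ℝ) : EReal) ≤ envU f y (εs k) x :=
      le_envU (by simp [(hεpos k).le])
    have h3 : envU f y (εs k) xt ≤ ((f x y - t * (c / 2) : ℝ) : EReal) := by
      apply envU_le
      intro y' hy'
      have hclose : dist (xt, y') (x, y) < r := by
        rw [Prod.dist_eq]
        apply max_lt
        · rw [dist_eq_norm, hxtnorm]
          calc min δ (r / 2) ≤ r / 2 := min_le_right _ _
            _ < r := by linarith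
        · rw [dist_eq_norm]
          calc ‖y' - y‖ ≤ εs k := hy'
            _ < min ε (r / 2) := hk
            _ ≤ r / 2 := min_le_right _ _
            _ < r := by linarith
      have hΦb : c / 2 < Φ (xt, y') := hball hclose
      have hsub := subgrad_ineq (hconv y') (hx_fd xt y') x
      have hxxt : x - xt = t • g := by rw [hxtdef]; abel
      rw [hxxt] at hsub
      have happ : ((fderiv ℝ F (xt, y')).comp (ContinuousLinearMap.inl ℝ _ _)) (t • g)
          = t * Φ (xt, y') := by
        rw [map_smul, ← hΦapp xt y']; simp
      rw [happ] at hsub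
      have hyy : f x y' ≤ f x y :=
        hymax y' (hy'.trans (hk.le.trans (min_le_left _ _)))
      have hmul : t * (c / 2) ≤ t * Φ (xt, y') :=
        mul_le_mul_of_nonneg_left hΦb.le ht0.le
      linarith
    have hfinal : ((f x y : ℝ) : EReal) ≤ ((f x y - t * (c / 2) : ℝ) : EReal) :=
      h2.trans (h1.trans h3)
    rw [EReal.coe_le_coe_iff] at hfinal
    nlinarith
  have SadToMm : IsGlobalSaddle f x y → IsGlobalMinimax f x y := by
    rintro ⟨h1, h2⟩
    exact ⟨h1, fun x' c hc => (h2 x').trans (hc y)⟩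
  exact ⟨⟨fun h => LtoS h, fun h => SadToL (StoSad h)⟩,
    ⟨StoSad, fun h => LtoS (SadToL h)⟩,
    fun h => SadToMm (StoSad (LtoS h))⟩
end

section
/- Let f : ℝ^n × ℝ^m → ℝ be twice continuously differentiable and let (x*,y*) satisfy ∂_x f(x*,y*) = 0 and ∂_y f(x*,y*) = 0. If the Hessian block B := ∂²_{yy} f(x*,y*) is negative definite and the Schur complement ∂²_{xx} f(x*,y*) − ∂²_{xy} f(x*,y*) · B⁻¹ · ∂²_{yx} f(x*,y*) is positive definite, then (x*,y*) is a local minimax point of f. -/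
open Filter

section AuxLemmas

open Matrix

/-- Positive definite matrices have a quadratic-form lower bound. -/
lemma posdef_lower {k : ℕ} {M : Matrix (Fin k) (Fin k) ℝ} (hM : M.PosDef) :
    ∃ c > 0, ∀ v : EuclideanSpace ℝ (Fin k), c * ‖v‖ ^ 2 ≤ v ⬝ᵥ (M *ᵥ v) := by
  set φ : EuclideanSpace ℝ (Fin k) → ℝ := fun v => v ⬝ᵥ (M *ᵥ v) with hφ
  have hcont : Continuous φ := by
    have : ∀ v : EuclideanSpace ℝ (Fin k), φ v = ∑ i, v i * ∑ j, M i j * v j := by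
      intro v; rfl
    simp only [funext this]
    exact continuous_finset_sum _ fun i _ => ((continuous_apply i).comp (PiLp.continuous_ofLp 2 _)).mul
      (continuous_finset_sum _ fun j _ => continuous_const.mul ((continuous_apply j).comp (PiLp.continuous_ofLp 2 _)))
  rcases Nat.eq_zero_or_pos k with hk | hk
  · refine ⟨1, one_pos, fun v => ?_⟩
    subst hk
    have hv : v = 0 := Subsingleton.elim v 0
    simp [hv, φ]
  · have hsph : (Metric.sphere (0 : EuclideanSpace ℝ (Fin k)) 1).Nonempty := by
      refine ⟨EuclideanSpace.single ⟨0, hk⟩ (1 : ℝ), ?_⟩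
      simp [EuclideanSpace.norm_single]
    obtain ⟨v₀, hv₀, hmin⟩ := (isCompact_sphere (0 : EuclideanSpace ℝ (Fin k)) 1).exists_isMinOn
      hsph (hcont.continuousOn)
    have hv₀n : ‖v₀‖ = 1 := by simpa using hv₀
    have hv₀0 : v₀ ≠ 0 := by intro h; rw [h] at hv₀n; simp at hv₀n
    have hc0 : 0 < φ v₀ := by
      have := hM.dotProduct_mulVec_pos (x := WithLp.ofLp v₀) (by simpa using hv₀0)
      simpa using this
    refine ⟨φ v₀, hc0, fun v => ?_⟩
    rcases eq_or_ne v 0 with hv | hv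
    · simp [hv, φ]
    · have hvn : (0:ℝ) < ‖v‖ := norm_pos_iff.mpr hv
      set w : EuclideanSpace ℝ (Fin k) := ‖v‖⁻¹ • v with hw
      have hwmem : w ∈ Metric.sphere (0 : EuclideanSpace ℝ (Fin k)) 1 := by
        simp [hw, norm_smul, abs_of_pos (inv_pos.mpr hvn), inv_mul_cancel₀ hvn.ne']
      have hscale : φ v = ‖v‖ ^ 2 * φ w := by
        have : v = ‖v‖ • w := by
          rw [hw, smul_smul, mul_inv_cancel₀ hvn.ne', one_smul]
        rw [hφ]
        conv_lhs => rw [this]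
        show (‖v‖ • w) ⬝ᵥ (M *ᵥ (‖v‖ • w)) = _
        rw [WithLp.ofLp_smul, Matrix.mulVec_smul, smul_dotProduct, dotProduct_smul]
        simp [smul_eq_mul]; ring
      have := hmin hwmem
      show φ v₀ * ‖v‖ ^ 2 ≤ φ v
      rw [hscale]
      have h2 : (0:ℝ) ≤ ‖v‖ ^ 2 := sq_nonneg _
      have h3 : φ v₀ ≤ φ w := this
      calc φ v₀ * ‖v‖ ^ 2 ≤ φ w * ‖v‖ ^ 2 := by nlinarith [h3, h2]
        _ = ‖v‖ ^ 2 * φ w := by ring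

lemma decomp {k : ℕ} (u : EuclideanSpace ℝ (Fin k)) :
    u = ∑ i, u i • EuclideanSpace.single i (1 : ℝ) := by
  have := (EuclideanSpace.basisFun (Fin k) ℝ).sum_repr u
  simp only [EuclideanSpace.basisFun_repr, EuclideanSpace.basisFun_apply] at this
  exact this.symm

lemma bilin_sum {P : Type*} [NormedAddCommGroup P] [NormedSpace ℝ P]
    (H : P →L[ℝ] P →L[ℝ] ℝ) {k l : ℕ} (a : Fin k → P) (b : Fin l → P)
    (c : Fin k → ℝ) (d : Fin l → ℝ) :
    H (∑ i, c i • a i) (∑ j, d j • b j) = ∑ i, ∑ j, c i * (d j * H (a i) (b j)) := by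
  simp only [map_sum, _root_.map_smul, ContinuousLinearMap.sum_apply,
    ContinuousLinearMap.smul_apply, ContinuousLinearMap.coe_sum', Finset.sum_apply,
    smul_eq_mul]
  simp only [Finset.mul_sum]
  rw [Finset.sum_comm]
  exact Finset.sum_congr rfl fun i _ => Finset.sum_congr rfl fun j _ => by ring

lemma dot_eq_double_sum {k l : ℕ} (M : Matrix (Fin k) (Fin l) ℝ) (u : Fin k → ℝ)
    (v : Fin l → ℝ) :
    u ⬝ᵥ (M *ᵥ v) = ∑ i, ∑ j, u i * (v j * M i j) := by
  simp only [dotProduct, Matrix.mulVec, Finset.mul_sum]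
  exact Finset.sum_congr rfl fun i _ => Finset.sum_congr rfl fun j _ => by ring

set_option maxHeartbeats 1000000 in
/-- Second-derivative Taylor estimate at a stationary point. -/
lemma taylor_bound {P : Type*} [NormedAddCommGroup P] [NormedSpace ℝ P]
    {g : P → ℝ} (hg : ContDiff ℝ 2 g) (p₀ : P) (h0 : fderiv ℝ g p₀ = 0)
    {η : ℝ} (hη : 0 < η) :
    ∃ ρ > 0, ∀ h : P, ‖h‖ < ρ →
      |g (p₀ + h) - g p₀ - (1/2) * (fderiv ℝ (fderiv ℝ g) p₀) h h| ≤ η * ‖h‖ ^ 2 := by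
  set H : P →L[ℝ] P →L[ℝ] ℝ := fderiv ℝ (fderiv ℝ g) p₀ with hH
  have hsymm : ∀ a b : P, H a b = H b a := fun a b =>
    (hg.contDiffAt.isSymmSndFDerivAt (by norm_num)).eq a b
  have hg1 : ContDiff ℝ 1 (fderiv ℝ g) := hg.fderiv_right (m := 1) (by norm_num)
  have hg2 : Continuous (fderiv ℝ (fderiv ℝ g)) :=
    (hg1.fderiv_right (m := 0) (by norm_num)).continuous
  have hev : ∀ᶠ q in nhds p₀, fderiv ℝ (fderiv ℝ g) q ∈ Metric.ball H η :=
    hg2.continuousAt.preimage_mem_nhds (Metric.ball_mem_nhds H hη)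
  rw [Metric.eventually_nhds_iff_ball] at hev
  obtain ⟨ρ, hρ, hball⟩ := hev
  refine ⟨ρ, hρ, fun h hh => ?_⟩
  have hDg : ∀ q : P, HasFDerivAt (fderiv ℝ g) (fderiv ℝ (fderiv ℝ g) q) q := fun q =>
    ((hg1.differentiable one_ne_zero) q).hasFDerivAt
  set Φ : P → P →L[ℝ] ℝ := fun q => fderiv ℝ g q - H (q - p₀) with hΦ
  have hΦderiv : ∀ q : P, HasFDerivAt Φ (fderiv ℝ (fderiv ℝ g) q - H) q := by
    intro q
    have h1 : HasFDerivAt (fun q : P => H (q - p₀)) H q := by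
      have : (fun q : P => H (q - p₀)) = fun q : P => H q - H p₀ := by
        funext q; rw [map_sub]
      rw [this]
      exact (H.hasFDerivAt).sub_const (H p₀)
    exact (hDg q).sub h1
  have hstepA : ∀ q ∈ Metric.ball p₀ ρ, ‖Φ q‖ ≤ η * ‖q - p₀‖ := by
    intro q hq
    have := Convex.norm_image_sub_le_of_norm_fderiv_le
      (f := Φ) (C := η) (s := Metric.ball p₀ ρ)
      (fun x hx => (hΦderiv x).differentiableAt)
      (fun x hx => by
        rw [(hΦderiv x).fderiv]
        exact le_of_lt (by rw [← dist_eq_norm]; exact hball x hx))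
      (convex_ball _ _) (Metric.mem_ball_self hρ) hq
    have hΦ0 : Φ p₀ = 0 := by simp [hΦ, h0]
    simpa [hΦ0] using this
  set χ : P → ℝ := fun q => g q - (1/2) * H (q - p₀) (q - p₀) with hχ
  have hχderiv : ∀ q : P, HasFDerivAt χ (Φ q) q := by
    intro q
    have hc : HasFDerivAt (fun q : P => H (q - p₀)) H q := by
      have : (fun q : P => H (q - p₀)) = fun q : P => H q - H p₀ := by
        funext q; rw [map_sub]
      rw [this]; exact (H.hasFDerivAt).sub_const (H p₀)
    have hu : HasFDerivAt (fun q : P => q - p₀) (ContinuousLinearMap.id ℝ P) q :=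
      (hasFDerivAt_id q).sub_const p₀
    have hq2 : HasFDerivAt (fun q : P => H (q - p₀) (q - p₀))
        ((H (q - p₀)).comp (ContinuousLinearMap.id ℝ P) + H.flip (q - p₀)) q :=
      hc.clm_apply hu
    have hfinal : HasFDerivAt χ
        (fderiv ℝ g q - (1/2 : ℝ) • ((H (q - p₀)).comp (ContinuousLinearMap.id ℝ P) + H.flip (q - p₀))) q :=
      ((hg.differentiable (by norm_num) q).hasFDerivAt).sub (hq2.const_smul (1/2 : ℝ))
    convert hfinal using 1
    ext w
    simp only [hΦ, ContinuousLinearMap.sub_apply, ContinuousLinearMap.smul_apply,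
      ContinuousLinearMap.add_apply, ContinuousLinearMap.comp_apply,
      ContinuousLinearMap.coe_id', id_eq, ContinuousLinearMap.flip_apply, smul_eq_mul]
    rw [hsymm w (q - p₀)]
    ring
  have hsub : Metric.closedBall p₀ ‖h‖ ⊆ Metric.ball p₀ ρ :=
    Metric.closedBall_subset_ball hh
  have hmvt := Convex.norm_image_sub_le_of_norm_fderiv_le
    (f := χ) (C := η * ‖h‖) (s := Metric.closedBall p₀ ‖h‖) (x := p₀) (y := p₀ + h)
    (fun x hx => (hχderiv x).differentiableAt)
    (fun x hx => by
      rw [(hχderiv x).fderiv]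
      calc ‖Φ x‖ ≤ η * ‖x - p₀‖ := hstepA x (hsub hx)
        _ ≤ η * ‖h‖ := by
          have : ‖x - p₀‖ ≤ ‖h‖ := by simpa [dist_eq_norm] using hx
          nlinarith)
    (convex_closedBall _ _) (Metric.mem_closedBall_self (norm_nonneg h))
    (by simp [Metric.mem_closedBall, dist_eq_norm])
  have : ‖χ (p₀ + h) - χ p₀‖ ≤ η * ‖h‖ * ‖h‖ := by
    simpa using hmvt
  have hχval : χ (p₀ + h) - χ p₀ = g (p₀ + h) - g p₀ - (1/2) * H h h := by
    simp [hχ]; ring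
  rw [hχval] at this
  calc |g (p₀ + h) - g p₀ - (1/2) * H h h| ≤ η * ‖h‖ * ‖h‖ := by
        simpa [Real.norm_eq_abs] using this
    _ = η * ‖h‖ ^ 2 := by ring

section Slice

variable {n m : ℕ} {f : EuclideanSpace ℝ (Fin n) → EuclideanSpace ℝ (Fin m) → ℝ}

lemma fderiv_slice_left
    (hf : ContDiff ℝ 2 (fun p : EuclideanSpace ℝ (Fin n) × EuclideanSpace ℝ (Fin m) => f p.1 p.2))
    (x : EuclideanSpace ℝ (Fin n)) (y : EuclideanSpace ℝ (Fin m)) :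
    fderiv ℝ (fun x' => f x' y) x
      = (fderiv ℝ (fun p : EuclideanSpace ℝ (Fin n) × EuclideanSpace ℝ (Fin m) => f p.1 p.2)
          (x, y)).comp (ContinuousLinearMap.inl ℝ _ _) := by
  have h1 : HasFDerivAt (fun x' : EuclideanSpace ℝ (Fin n) => (x', y))
      (ContinuousLinearMap.inl ℝ _ _) x := hasFDerivAt_prodMk_left x y
  exact ((((hf.differentiable (by norm_num)) (x, y)).hasFDerivAt).comp x h1).fderiv

lemma fderiv_slice_right
    (hf : ContDiff ℝ 2 (fun p : EuclideanSpace ℝ (Fin n) × EuclideanSpace ℝ (Fin m) => f p.1 p.2))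
    (x : EuclideanSpace ℝ (Fin n)) (y : EuclideanSpace ℝ (Fin m)) :
    fderiv ℝ (fun y' => f x y') y
      = (fderiv ℝ (fun p : EuclideanSpace ℝ (Fin n) × EuclideanSpace ℝ (Fin m) => f p.1 p.2)
          (x, y)).comp (ContinuousLinearMap.inr ℝ _ _) := by
  have h1 : HasFDerivAt (fun y' : EuclideanSpace ℝ (Fin m) => (x, y'))
      (ContinuousLinearMap.inr ℝ _ _) y := hasFDerivAt_prodMk_right x y
  exact ((((hf.differentiable (by norm_num)) (x, y)).hasFDerivAt).comp y h1).fderiv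

lemma fderiv_comp_eval {X P : Type*} [NormedAddCommGroup X] [NormedSpace ℝ X]
    [NormedAddCommGroup P] [NormedSpace ℝ P]
    {g : P → ℝ} (hg : ContDiff ℝ 2 g) {ι : X → P} {J : X →L[ℝ] P} {x₀ : X}
    (hι : HasFDerivAt ι J x₀) (w : P) (v : X) :
    fderiv ℝ (fun x => fderiv ℝ g (ι x) w) x₀ v = fderiv ℝ (fderiv ℝ g) (ι x₀) (J v) w := by
  have h1 : HasFDerivAt (fun x => fderiv ℝ g (ι x))
      ((fderiv ℝ (fderiv ℝ g) (ι x₀)).comp J) x₀ :=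
    ((((hg.fderiv_right (m := 1) (by norm_num)).differentiable one_ne_zero) (ι x₀)).hasFDerivAt).comp
      x₀ hι
  have h2 : HasFDerivAt (fun x => fderiv ℝ g (ι x) w)
      ((ContinuousLinearMap.apply ℝ ℝ w).comp ((fderiv ℝ (fderiv ℝ g) (ι x₀)).comp J)) x₀ :=
    ((ContinuousLinearMap.apply ℝ ℝ w).hasFDerivAt).comp x₀ h1
  rw [h2.fderiv]; rfl

lemma pair_decomp_left (u : EuclideanSpace ℝ (Fin n)) :
    ((u, 0) : EuclideanSpace ℝ (Fin n) × EuclideanSpace ℝ (Fin m))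
      = ∑ i, u i • ((EuclideanSpace.single i (1:ℝ), 0) :
          EuclideanSpace ℝ (Fin n) × EuclideanSpace ℝ (Fin m)) := by
  refine Prod.ext ?_ ?_
  · simpa [Prod.fst_sum] using decomp u
  · simp [Prod.snd_sum]

lemma pair_decomp_right (v : EuclideanSpace ℝ (Fin m)) :
    ((0, v) : EuclideanSpace ℝ (Fin n) × EuclideanSpace ℝ (Fin m))
      = ∑ j, v j • ((0, EuclideanSpace.single j (1:ℝ)) :
          EuclideanSpace ℝ (Fin n) × EuclideanSpace ℝ (Fin m)) := by
  refine Prod.ext ?_ ?_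
  · simp [Prod.fst_sum]
  · simpa [Prod.snd_sum] using decomp v

end Slice

end AuxLemmas

/-- The `n × n` Hessian block of `f` in the `x`-variables. -/
noncomputable def hessXX {n m : ℕ}
    (f : EuclideanSpace ℝ (Fin n) → EuclideanSpace ℝ (Fin m) → ℝ)
    (x : EuclideanSpace ℝ (Fin n)) (y : EuclideanSpace ℝ (Fin m)) :
    Matrix (Fin n) (Fin n) ℝ :=
  fun i j =>
    fderiv ℝ (fun x' => fderiv ℝ (fun x'' => f x'' y) x' (EuclideanSpace.single j (1 : ℝ)))
      x (EuclideanSpace.single i (1 : ℝ))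

/-- The `m × m` Hessian block of `f` in the `y`-variables. -/
noncomputable def hessYY {n m : ℕ}
    (f : EuclideanSpace ℝ (Fin n) → EuclideanSpace ℝ (Fin m) → ℝ)
    (x : EuclideanSpace ℝ (Fin n)) (y : EuclideanSpace ℝ (Fin m)) :
    Matrix (Fin m) (Fin m) ℝ :=
  fun i j =>
    fderiv ℝ (fun y' => fderiv ℝ (fun y'' => f x y'') y' (EuclideanSpace.single j (1 : ℝ)))
      y (EuclideanSpace.single i (1 : ℝ))

/-- The `n × m` mixed Hessian block `∂²_{xy} f` (differentiate in `y`, then in `x`). -/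
noncomputable def hessXY {n m : ℕ}
    (f : EuclideanSpace ℝ (Fin n) → EuclideanSpace ℝ (Fin m) → ℝ)
    (x : EuclideanSpace ℝ (Fin n)) (y : EuclideanSpace ℝ (Fin m)) :
    Matrix (Fin n) (Fin m) ℝ :=
  fun i j =>
    fderiv ℝ (fun x' => fderiv ℝ (fun y'' => f x' y'') y (EuclideanSpace.single j (1 : ℝ)))
      x (EuclideanSpace.single i (1 : ℝ))

/-- The `m × n` mixed Hessian block `∂²_{yx} f` (differentiate in `x`, then in `y`). -/
noncomputable def hessYX {n m : ℕ}
    (f : EuclideanSpace ℝ (Fin n) → EuclideanSpace ℝ (Fin m) → ℝ)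
    (x : EuclideanSpace ℝ (Fin n)) (y : EuclideanSpace ℝ (Fin m)) :
    Matrix (Fin m) (Fin n) ℝ :=
  fun j i =>
    fderiv ℝ (fun y' => fderiv ℝ (fun x'' => f x'' y') x (EuclideanSpace.single i (1 : ℝ)))
      y (EuclideanSpace.single j (1 : ℝ))

/-- A real matrix is negative definite iff its negation is positive definite. -/
def Matrix.NegDef' {m : ℕ} (M : Matrix (Fin m) (Fin m) ℝ) : Prop := (-M).PosDef


section Blocks

variable {n m : ℕ} {f : EuclideanSpace ℝ (Fin n) → EuclideanSpace ℝ (Fin m) → ℝ}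

lemma hessXX_eq
    (hf : ContDiff ℝ 2 (fun p : EuclideanSpace ℝ (Fin n) × EuclideanSpace ℝ (Fin m) => f p.1 p.2))
    (x : EuclideanSpace ℝ (Fin n)) (y : EuclideanSpace ℝ (Fin m)) (i j : Fin n) :
    hessXX f x y i j
      = fderiv ℝ (fderiv ℝ (fun p : EuclideanSpace ℝ (Fin n) × EuclideanSpace ℝ (Fin m) => f p.1 p.2))
          (x, y) (EuclideanSpace.single i (1:ℝ), 0) (EuclideanSpace.single j (1:ℝ), 0) := by
  have hfun : (fun x' => fderiv ℝ (fun x'' => f x'' y) x' (EuclideanSpace.single j (1:ℝ)))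
      = fun x' => fderiv ℝ (fun p : EuclideanSpace ℝ (Fin n) × EuclideanSpace ℝ (Fin m) => f p.1 p.2)
          (x', y) (EuclideanSpace.single j (1:ℝ), 0) := by
    funext x'; rw [fderiv_slice_left hf x' y]; rfl
  show fderiv ℝ (fun x' => fderiv ℝ (fun x'' => f x'' y) x' (EuclideanSpace.single j (1:ℝ)))
      x (EuclideanSpace.single i (1:ℝ)) = _
  rw [hfun]
  exact fderiv_comp_eval hf (hasFDerivAt_prodMk_left x y) _ _

lemma hessYY_eq
    (hf : ContDiff ℝ 2 (fun p : EuclideanSpace ℝ (Fin n) × EuclideanSpace ℝ (Fin m) => f p.1 p.2))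
    (x : EuclideanSpace ℝ (Fin n)) (y : EuclideanSpace ℝ (Fin m)) (i j : Fin m) :
    hessYY f x y i j
      = fderiv ℝ (fderiv ℝ (fun p : EuclideanSpace ℝ (Fin n) × EuclideanSpace ℝ (Fin m) => f p.1 p.2))
          (x, y) (0, EuclideanSpace.single i (1:ℝ)) (0, EuclideanSpace.single j (1:ℝ)) := by
  have hfun : (fun y' => fderiv ℝ (fun y'' => f x y'') y' (EuclideanSpace.single j (1:ℝ)))
      = fun y' => fderiv ℝ (fun p : EuclideanSpace ℝ (Fin n) × EuclideanSpace ℝ (Fin m) => f p.1 p.2)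
          (x, y') (0, EuclideanSpace.single j (1:ℝ)) := by
    funext y'; rw [fderiv_slice_right hf x y']; rfl
  show fderiv ℝ (fun y' => fderiv ℝ (fun y'' => f x y'') y' (EuclideanSpace.single j (1:ℝ)))
      y (EuclideanSpace.single i (1:ℝ)) = _
  rw [hfun]
  exact fderiv_comp_eval hf (hasFDerivAt_prodMk_right x y) _ _

lemma hessXY_eq
    (hf : ContDiff ℝ 2 (fun p : EuclideanSpace ℝ (Fin n) × EuclideanSpace ℝ (Fin m) => f p.1 p.2))
    (x : EuclideanSpace ℝ (Fin n)) (y : EuclideanSpace ℝ (Fin m)) (i : Fin n) (j : Fin m) :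
    hessXY f x y i j
      = fderiv ℝ (fderiv ℝ (fun p : EuclideanSpace ℝ (Fin n) × EuclideanSpace ℝ (Fin m) => f p.1 p.2))
          (x, y) (EuclideanSpace.single i (1:ℝ), 0) (0, EuclideanSpace.single j (1:ℝ)) := by
  have hfun : (fun x' => fderiv ℝ (fun y'' => f x' y'') y (EuclideanSpace.single j (1:ℝ)))
      = fun x' => fderiv ℝ (fun p : EuclideanSpace ℝ (Fin n) × EuclideanSpace ℝ (Fin m) => f p.1 p.2)
          (x', y) (0, EuclideanSpace.single j (1:ℝ)) := by
    funext x'; rw [fderiv_slice_right hf x' y]; rfl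
  show fderiv ℝ (fun x' => fderiv ℝ (fun y'' => f x' y'') y (EuclideanSpace.single j (1:ℝ)))
      x (EuclideanSpace.single i (1:ℝ)) = _
  rw [hfun]
  exact fderiv_comp_eval hf (hasFDerivAt_prodMk_left x y) _ _

lemma hessYX_eq
    (hf : ContDiff ℝ 2 (fun p : EuclideanSpace ℝ (Fin n) × EuclideanSpace ℝ (Fin m) => f p.1 p.2))
    (x : EuclideanSpace ℝ (Fin n)) (y : EuclideanSpace ℝ (Fin m)) (j : Fin m) (i : Fin n) :
    hessYX f x y j i
      = fderiv ℝ (fderiv ℝ (fun p : EuclideanSpace ℝ (Fin n) × EuclideanSpace ℝ (Fin m) => f p.1 p.2))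
          (x, y) (0, EuclideanSpace.single j (1:ℝ)) (EuclideanSpace.single i (1:ℝ), 0) := by
  have hfun : (fun y' => fderiv ℝ (fun x'' => f x'' y') x (EuclideanSpace.single i (1:ℝ)))
      = fun y' => fderiv ℝ (fun p : EuclideanSpace ℝ (Fin n) × EuclideanSpace ℝ (Fin m) => f p.1 p.2)
          (x, y') (EuclideanSpace.single i (1:ℝ), 0) := by
    funext y'; rw [fderiv_slice_left hf x y']; rfl
  show fderiv ℝ (fun y' => fderiv ℝ (fun x'' => f x'' y') x (EuclideanSpace.single i (1:ℝ)))
      y (EuclideanSpace.single j (1:ℝ)) = _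
  rw [hfun]
  exact fderiv_comp_eval hf (hasFDerivAt_prodMk_right x y) _ _

end Blocks

set_option maxHeartbeats 8000000 in
open Matrix in
/-- Second-order sufficient condition: at a stationary point, if `∂²_{yy} f ≺ 0`
and the Schur complement is positive definite, then the point is local minimax. -/
theorem localMinimax_of_secondOrder_sufficient {n m : ℕ}
    (f : EuclideanSpace ℝ (Fin n) → EuclideanSpace ℝ (Fin m) → ℝ)
    (hf : ContDiff ℝ 2 (fun p : EuclideanSpace ℝ (Fin n) × EuclideanSpace ℝ (Fin m) => f p.1 p.2))
    (xstar : EuclideanSpace ℝ (Fin n)) (ystar : EuclideanSpace ℝ (Fin m))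
    (hstatx : gradient (fun x' => f x' ystar) xstar = 0)
    (hstaty : gradient (fun y' => f xstar y') ystar = 0)
    (hneg : Matrix.NegDef' (hessYY f xstar ystar))
    (hschur : (hessXX f xstar ystar -
      hessXY f xstar ystar * (hessYY f xstar ystar)⁻¹ * hessYX f xstar ystar).PosDef) :
    IsLocalMinimax f xstar ystar := by
  classical
  -- first derivative vanishes
  have hdx : fderiv ℝ (fun x' => f x' ystar) xstar = 0 := by
    have := congrArg (InnerProductSpace.toDual ℝ (EuclideanSpace ℝ (Fin n))) hstatx
    simpa [gradient] using this
  have hdy : fderiv ℝ (fun y' => f xstar y') ystar = 0 := by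
    have := congrArg (InnerProductSpace.toDual ℝ (EuclideanSpace ℝ (Fin m))) hstaty
    simpa [gradient] using this
  have hgrad0 : fderiv ℝ (fun p : EuclideanSpace ℝ (Fin n) × EuclideanSpace ℝ (Fin m) => f p.1 p.2)
      (xstar, ystar) = 0 := by
    have h1 : (fderiv ℝ (fun p : EuclideanSpace ℝ (Fin n) × EuclideanSpace ℝ (Fin m) => f p.1 p.2)
        (xstar, ystar)).comp (ContinuousLinearMap.inl ℝ _ _) = 0 := by
      rw [← fderiv_slice_left hf xstar ystar]; exact hdx
    have h2 : (fderiv ℝ (fun p : EuclideanSpace ℝ (Fin n) × EuclideanSpace ℝ (Fin m) => f p.1 p.2)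
        (xstar, ystar)).comp (ContinuousLinearMap.inr ℝ _ _) = 0 := by
      rw [← fderiv_slice_right hf xstar ystar]; exact hdy
    refine ContinuousLinearMap.ext fun w => ?_
    obtain ⟨u, v⟩ := w
    have hw : ((u, v) : EuclideanSpace ℝ (Fin n) × EuclideanSpace ℝ (Fin m)) = (u, 0) + (0, v) := by
      simp
    rw [hw, map_add]
    have e1 := DFunLike.congr_fun h1 u
    have e2 := DFunLike.congr_fun h2 v
    simp only [ContinuousLinearMap.comp_apply, ContinuousLinearMap.inl_apply,
      ContinuousLinearMap.inr_apply, ContinuousLinearMap.zero_apply] at e1 e2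
    simp [e1, e2]
  -- the four dot-product identities for the Hessian bilinear form
  have hXXd : ∀ u u' : EuclideanSpace ℝ (Fin n),
      fderiv ℝ (fderiv ℝ (fun p : EuclideanSpace ℝ (Fin n) × EuclideanSpace ℝ (Fin m) => f p.1 p.2))
        (xstar, ystar) (u, 0) (u', 0) = u ⬝ᵥ (hessXX f xstar ystar *ᵥ u') := by
    intro u u'
    conv_lhs => rw [pair_decomp_left u, pair_decomp_left u']
    rw [bilin_sum, dot_eq_double_sum]
    exact Finset.sum_congr rfl fun i _ => Finset.sum_congr rfl fun j _ => by
      rw [hessXX_eq hf xstar ystar i j]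
  have hXYd : ∀ (u : EuclideanSpace ℝ (Fin n)) (v : EuclideanSpace ℝ (Fin m)),
      fderiv ℝ (fderiv ℝ (fun p : EuclideanSpace ℝ (Fin n) × EuclideanSpace ℝ (Fin m) => f p.1 p.2))
        (xstar, ystar) (u, 0) (0, v) = u ⬝ᵥ (hessXY f xstar ystar *ᵥ v) := by
    intro u v
    conv_lhs => rw [pair_decomp_left u, pair_decomp_right v]
    rw [bilin_sum, dot_eq_double_sum]
    exact Finset.sum_congr rfl fun i _ => Finset.sum_congr rfl fun j _ => by
      rw [hessXY_eq hf xstar ystar i j]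
  have hYXd : ∀ (v : EuclideanSpace ℝ (Fin m)) (u : EuclideanSpace ℝ (Fin n)),
      fderiv ℝ (fderiv ℝ (fun p : EuclideanSpace ℝ (Fin n) × EuclideanSpace ℝ (Fin m) => f p.1 p.2))
        (xstar, ystar) (0, v) (u, 0) = v ⬝ᵥ (hessYX f xstar ystar *ᵥ u) := by
    intro v u
    conv_lhs => rw [pair_decomp_right v, pair_decomp_left u]
    rw [bilin_sum, dot_eq_double_sum]
    exact Finset.sum_congr rfl fun j _ => Finset.sum_congr rfl fun i _ => by
      rw [hessYX_eq hf xstar ystar j i]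
  have hYYd : ∀ v v' : EuclideanSpace ℝ (Fin m),
      fderiv ℝ (fderiv ℝ (fun p : EuclideanSpace ℝ (Fin n) × EuclideanSpace ℝ (Fin m) => f p.1 p.2))
        (xstar, ystar) (0, v) (0, v') = v ⬝ᵥ (hessYY f xstar ystar *ᵥ v') := by
    intro v v'
    conv_lhs => rw [pair_decomp_right v, pair_decomp_right v']
    rw [bilin_sum, dot_eq_double_sum]
    exact Finset.sum_congr rfl fun i _ => Finset.sum_congr rfl fun j _ => by
      rw [hessYY_eq hf xstar ystar i j]
  -- constants from positive definiteness
  obtain ⟨c, hc, hcS⟩ := posdef_lower hschur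
  obtain ⟨cB, hcB, hcBB⟩ := posdef_lower hneg
  -- the linear response map
  obtain ⟨Mmat, hMmat⟩ : ∃ M : Matrix (Fin m) (Fin n) ℝ,
      M = -((hessYY f xstar ystar)⁻¹ * hessYX f xstar ystar) := ⟨_, rfl⟩
  obtain ⟨L, hLdef⟩ : ∃ L : EuclideanSpace ℝ (Fin n) →L[ℝ] EuclideanSpace ℝ (Fin m),
      L = LinearMap.toContinuousLinearMap (Matrix.toEuclideanLin Mmat) := ⟨_, rfl⟩
  obtain ⟨K, hK⟩ : ∃ K : ℝ, K = ‖L‖ := ⟨_, rfl⟩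
  have hKnn : (0:ℝ) ≤ K := hK ▸ norm_nonneg L
  have hLapp : ∀ u : EuclideanSpace ℝ (Fin n), (L u : Fin m → ℝ) = Mmat *ᵥ (u : Fin n → ℝ) := by
    intro u
    simp only [hLdef, LinearMap.coe_toContinuousLinearMap', Matrix.toEuclideanLin_apply]
  have hdetB : IsUnit (hessYY f xstar ystar).det := by
    have h1 : (0:ℝ) < (-(hessYY f xstar ystar)).det := hneg.det_pos
    have hne : (hessYY f xstar ystar).det ≠ 0 := by
      intro h
      rw [Matrix.det_neg, h, mul_zero] at h1
      exact lt_irrefl _ h1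
    exact isUnit_iff_ne_zero.mpr hne
  have hBM : hessYY f xstar ystar * Mmat = -(hessYX f xstar ystar) := by
    rw [hMmat, Matrix.mul_neg, ← Matrix.mul_assoc,
      Matrix.mul_nonsing_inv _ hdetB, Matrix.one_mul]
  -- Taylor estimate
  obtain ⟨η, hηdef⟩ : ∃ η : ℝ, η = min (c / (2 * (1 + K) ^ 2)) (cB / 2) := ⟨_, rfl⟩
  have hη : 0 < η := by
    rw [hηdef]
    apply lt_min
    · have h1K : (0:ℝ) < (1 + K) ^ 2 := by positivity
      positivity
    · positivity
  obtain ⟨ρ, hρ, hTay⟩ := taylor_bound hf (xstar, ystar) hgrad0 hη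
  -- upper bound near ystar
  have hupper : ∀ w : EuclideanSpace ℝ (Fin m), ‖w‖ < ρ →
      f xstar (ystar + w) ≤ f xstar ystar := by
    intro w hw
    have hnorm : ‖(((0 : EuclideanSpace ℝ (Fin n)), w) :
        EuclideanSpace ℝ (Fin n) × EuclideanSpace ℝ (Fin m))‖ = ‖w‖ := by
      simp [Prod.norm_def]
    have h1 := hTay ((0 : EuclideanSpace ℝ (Fin n)), w) (by rw [hnorm]; exact hw)
    have hpt : ((xstar, ystar) : EuclideanSpace ℝ (Fin n) × EuclideanSpace ℝ (Fin m))
        + ((0 : EuclideanSpace ℝ (Fin n)), w) = (xstar, ystar + w) := by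
      simp [Prod.ext_iff]
    rw [hpt, hnorm, hYYd w w] at h1
    have hBneg : w ⬝ᵥ (hessYY f xstar ystar *ᵥ w) ≤ -(cB * ‖w‖ ^ 2) := by
      have h2 := hcBB w
      rw [Matrix.neg_mulVec, dotProduct_neg] at h2
      linarith
    have habs := (abs_le.mp h1).2
    have hη2 : η ≤ cB / 2 := hηdef ▸ min_le_right _ _
    have hsq : (0:ℝ) ≤ ‖w‖ ^ 2 := sq_nonneg _
    have hmul : η * ‖w‖ ^ 2 ≤ cB / 2 * ‖w‖ ^ 2 := mul_le_mul_of_nonneg_right hη2 hsq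
    linarith [habs, hBneg, hmul]
  -- the quadratic form along the response direction
  have hQuv : ∀ u : EuclideanSpace ℝ (Fin n),
      fderiv ℝ (fderiv ℝ (fun p : EuclideanSpace ℝ (Fin n) × EuclideanSpace ℝ (Fin m) => f p.1 p.2))
        (xstar, ystar) (u, L u) (u, L u)
      = u ⬝ᵥ ((hessXX f xstar ystar -
          hessXY f xstar ystar * (hessYY f xstar ystar)⁻¹ * hessYX f xstar ystar) *ᵥ u) := by
    intro u
    have e0 : ((u, L u) : EuclideanSpace ℝ (Fin n) × EuclideanSpace ℝ (Fin m))
        = (u, 0) + (0, L u) := by simp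
    rw [e0, map_add, map_add, ContinuousLinearMap.add_apply, ContinuousLinearMap.add_apply,
      hXXd u u, hXYd u (L u), hYXd (L u) u, hYYd (L u) (L u)]
    have hv' : (L u : Fin m → ℝ) = Mmat *ᵥ (u : Fin n → ℝ) := hLapp u
    have hBv : hessYY f xstar ystar *ᵥ (L u : Fin m → ℝ)
        = -(hessYX f xstar ystar *ᵥ (u : Fin n → ℝ)) := by
      rw [hv', Matrix.mulVec_mulVec, hBM, Matrix.neg_mulVec]
    have hCv : hessXY f xstar ystar *ᵥ (L u : Fin m → ℝ)
        = -((hessXY f xstar ystar * (hessYY f xstar ystar)⁻¹ * hessYX f xstar ystar)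
            *ᵥ (u : Fin n → ℝ)) := by
      rw [hv', Matrix.mulVec_mulVec, hMmat, Matrix.mul_neg, ← Matrix.mul_assoc,
        Matrix.neg_mulVec]
    rw [hBv, hCv, Matrix.sub_mulVec, dotProduct_sub, dotProduct_neg,
      dotProduct_neg]
    ring
  -- the lower estimate for x near xstar
  have hlower : ∀ u : EuclideanSpace ℝ (Fin n), ‖((u, L u) :
      EuclideanSpace ℝ (Fin n) × EuclideanSpace ℝ (Fin m))‖ < ρ →
      f xstar ystar ≤ f (xstar + u) (ystar + L u) := by
    intro u hu
    have h1 := hTay (u, L u) hu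
    have hpt : ((xstar, ystar) : EuclideanSpace ℝ (Fin n) × EuclideanSpace ℝ (Fin m))
        + (u, L u) = (xstar + u, ystar + L u) := rfl
    rw [hpt, hQuv u] at h1
    have hS := hcS u
    have habs := (abs_le.mp h1).1
    have hηc : η ≤ c / (2 * (1 + K) ^ 2) := hηdef ▸ min_le_left _ _
    have hnh : ‖((u, L u) : EuclideanSpace ℝ (Fin n) × EuclideanSpace ℝ (Fin m))‖
        ≤ (1 + K) * ‖u‖ := by
      rw [Prod.norm_def]
      apply max_le
      · nlinarith [norm_nonneg u]
      · have hop := L.le_opNorm u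
        rw [← hK] at hop
        nlinarith [norm_nonneg u]
    have hn2 : ‖((u, L u) : EuclideanSpace ℝ (Fin n) × EuclideanSpace ℝ (Fin m))‖ ^ 2
        ≤ (1 + K) ^ 2 * ‖u‖ ^ 2 := by
      have hnn := norm_nonneg ((u, L u) : EuclideanSpace ℝ (Fin n) × EuclideanSpace ℝ (Fin m))
      nlinarith [hnh]
    have hKpos : (0:ℝ) < (1 + K) ^ 2 := by positivity
    have he1 : η * ‖((u, L u) : EuclideanSpace ℝ (Fin n) × EuclideanSpace ℝ (Fin m))‖ ^ 2
        ≤ (c / 2) * ‖u‖ ^ 2 := by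
      have he2 : η * (1 + K) ^ 2 ≤ c / 2 := by
        have := mul_le_mul_of_nonneg_right hηc (le_of_lt hKpos)
        calc η * (1 + K) ^ 2 ≤ c / (2 * (1 + K) ^ 2) * (1 + K) ^ 2 := this
          _ = c / 2 := by field_simp
      calc η * ‖((u, L u) : EuclideanSpace ℝ (Fin n) × EuclideanSpace ℝ (Fin m))‖ ^ 2
          ≤ η * ((1 + K) ^ 2 * ‖u‖ ^ 2) := mul_le_mul_of_nonneg_left hn2 (le_of_lt hη)
        _ = (η * (1 + K) ^ 2) * ‖u‖ ^ 2 := by ring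
        _ ≤ (c / 2) * ‖u‖ ^ 2 := mul_le_mul_of_nonneg_right he2 (sq_nonneg ‖u‖)
    linarith [habs, hS, he1]
  -- conclusion: part (i)
  constructor
  · refine ⟨ρ / 2, by linarith, fun y hy => ?_⟩
    have := hupper (y - ystar) (lt_of_le_of_lt hy (by linarith))
    simpa [add_sub_cancel] using this
  -- part (ii)
  · refine ⟨fun k => ρ / 2 * (1 / ((k : ℝ) + 1)), fun k => by positivity, ?_, fun k => ?_⟩
    · have := tendsto_one_div_add_atTop_nhds_zero_nat.const_mul (ρ / 2)
      simpa using this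
    · set ε := ρ / 2 * (1 / ((k : ℝ) + 1)) with hεdef
      have hεpos : 0 < ε := by rw [hεdef]; positivity
      have hερ : ε ≤ ρ / 2 := by
        rw [hεdef]
        have h1 : 1 / ((k : ℝ) + 1) ≤ 1 := by
          rw [div_le_one (by positivity)]
          linarith [Nat.cast_nonneg (α := ℝ) k]
        nlinarith
      obtain ⟨δ, hδdef⟩ : ∃ d : ℝ, d = ε / (K + 1) := ⟨_, rfl⟩
      have hδpos : 0 < δ := by rw [hδdef]; positivity
      refine ⟨δ, hδpos, fun x hx => ?_⟩
      have hup : envU f ystar ε xstar ≤ ((f xstar ystar : ℝ) : EReal) := by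
        refine iSup₂_le fun y hy => ?_
        have hy' : ‖y - ystar‖ ≤ ε := hy
        refine EReal.coe_le_coe_iff.mpr ?_
        have := hupper (y - ystar) (lt_of_le_of_lt hy' (by linarith))
        simpa [add_sub_cancel] using this
      obtain ⟨u, hu⟩ : ∃ u : EuclideanSpace ℝ (Fin n), u = x - xstar := ⟨_, rfl⟩
      have hunorm : ‖u‖ ≤ δ := by rw [hu]; exact hx
      have hδε : (K + 1) * δ = ε := by
        rw [hδdef]; field_simp
      have hvε : ‖L u‖ ≤ ε := by
        have h1 := L.le_opNorm u
        rw [← hK] at h1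
        have : K * δ ≤ ε := by nlinarith
        calc ‖L u‖ ≤ K * ‖u‖ := h1
          _ ≤ K * δ := by nlinarith
          _ ≤ ε := this
      have hhρ : ‖((u, L u) : EuclideanSpace ℝ (Fin n) × EuclideanSpace ℝ (Fin m))‖ < ρ := by
        rw [Prod.norm_def]
        apply max_lt
        · calc ‖u‖ ≤ δ := hunorm
            _ ≤ (K + 1) * δ := by nlinarith
            _ = ε := hδε
            _ ≤ ρ / 2 := hερ
            _ < ρ := by linarith
        · calc ‖L u‖ ≤ ε := hvε
            _ ≤ ρ / 2 := hερ
            _ < ρ := by linarith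
      have hxu : xstar + u = x := by rw [hu, add_sub_cancel]
      have hfx : f xstar ystar ≤ f x (ystar + L u) := by
        have := hlower u hhρ
        rwa [hxu] at this
      have hlow : ((f xstar ystar : ℝ) : EReal) ≤ envU f ystar ε x := by
        refine le_trans (EReal.coe_le_coe_iff.mpr hfx) ?_
        refine le_iSup₂_of_le (ystar + L u) ?_ le_rfl
        show ‖ystar + L u - ystar‖ ≤ ε
        rwa [add_sub_cancel_left]
      exact hup.trans hlow
end

section
/- Let q(x,y) = ½ xᵀA x + ½ yᵀB y + xᵀC y + aᵀx + bᵀy + c₀ be a quadratic game on ℝ^n × ℝ^m with A, B symmetric. Then (x*,y*) is a local minimax point of q if and only if (x*,y*) is stationary (i.e. A x* + C y* + a = 0 and Cᵀ x* + B y* + b = 0) and (x*,y*) is a global minimax point of q. In particular, every local minimax point of an unconstrained quadratic game is a global minimax point. -/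
open Filter Matrix

/-- The quadratic game `q(x,y) = ½ xᵀAx + ½ yᵀBy + xᵀCy + aᵀx + bᵀy + c₀`. -/
noncomputable def quadGame {n m : ℕ} (A : Matrix (Fin n) (Fin n) ℝ)
    (B : Matrix (Fin m) (Fin m) ℝ) (C : Matrix (Fin n) (Fin m) ℝ)
    (a : Fin n → ℝ) (b : Fin m → ℝ) (c₀ : ℝ)
    (x : EuclideanSpace ℝ (Fin n)) (y : EuclideanSpace ℝ (Fin m)) : ℝ :=
  (1 / 2) * (x ⬝ᵥ (A *ᵥ x)) + (1 / 2) * (y ⬝ᵥ (B *ᵥ y)) + x ⬝ᵥ (C *ᵥ y) +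
    a ⬝ᵥ x + b ⬝ᵥ y + c₀


open RealInnerProductSpace

section QGAux

lemma quadGame_expand {n m : ℕ} (A : Matrix (Fin n) (Fin n) ℝ)
    (B : Matrix (Fin m) (Fin m) ℝ) (C : Matrix (Fin n) (Fin m) ℝ)
    (a : Fin n → ℝ) (b : Fin m → ℝ) (c₀ : ℝ) (hA : A.IsSymm) (hB : B.IsSymm)
    (xs h : EuclideanSpace ℝ (Fin n)) (ys u : EuclideanSpace ℝ (Fin m)) :
    quadGame A B C a b c₀ (xs + h) (ys + u) = quadGame A B C a b c₀ xs ys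
      + (A *ᵥ xs + C *ᵥ ys + a) ⬝ᵥ h + (Cᵀ *ᵥ xs + B *ᵥ ys + b) ⬝ᵥ u
      + (1/2) * (h ⬝ᵥ (A *ᵥ h)) + (1/2) * (u ⬝ᵥ (B *ᵥ u)) + h ⬝ᵥ (C *ᵥ u) := by
  have key : ∀ (x h : Fin n → ℝ) (y u : Fin m → ℝ),
      (1 / 2) * ((x + h) ⬝ᵥ (A *ᵥ (x + h))) + (1 / 2) * ((y + u) ⬝ᵥ (B *ᵥ (y + u)))
        + (x + h) ⬝ᵥ (C *ᵥ (y + u)) + a ⬝ᵥ (x + h) + b ⬝ᵥ (y + u) + c₀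
      = ((1 / 2) * (x ⬝ᵥ (A *ᵥ x)) + (1 / 2) * (y ⬝ᵥ (B *ᵥ y)) + x ⬝ᵥ (C *ᵥ y) +
          a ⬝ᵥ x + b ⬝ᵥ y + c₀)
        + (A *ᵥ x + C *ᵥ y + a) ⬝ᵥ h + (Cᵀ *ᵥ x + B *ᵥ y + b) ⬝ᵥ u
        + (1/2) * (h ⬝ᵥ (A *ᵥ h)) + (1/2) * (u ⬝ᵥ (B *ᵥ u)) + h ⬝ᵥ (C *ᵥ u) := by
    intro x h y u
    have hAx : h ⬝ᵥ (A *ᵥ x) = x ⬝ᵥ (A *ᵥ h) := by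
      rw [dotProduct_mulVec, ← mulVec_transpose, hA.eq, dotProduct_comm]
    have hBy : u ⬝ᵥ (B *ᵥ y) = y ⬝ᵥ (B *ᵥ u) := by
      rw [dotProduct_mulVec, ← mulVec_transpose, hB.eq, dotProduct_comm]
    have hC : ∀ (x : Fin n → ℝ) (y : Fin m → ℝ), (Cᵀ *ᵥ x) ⬝ᵥ y = x ⬝ᵥ (C *ᵥ y) := by
      intro x y; rw [dotProduct_mulVec, ← mulVec_transpose]
    have hCc : h ⬝ᵥ (C *ᵥ y) = (C *ᵥ y) ⬝ᵥ h := dotProduct_comm _ _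
    have hAc : x ⬝ᵥ (A *ᵥ h) = (A *ᵥ x) ⬝ᵥ h := by
      rw [← hAx, dotProduct_comm]
    have hBc : y ⬝ᵥ (B *ᵥ u) = (B *ᵥ y) ⬝ᵥ u := by
      rw [← hBy, dotProduct_comm]
    simp only [mulVec_add, dotProduct_add, add_dotProduct, hC, hAx, hBy, hCc, hAc, hBc]
    ring
  exact key xs h ys u

lemma quadGame_expand_y {n m : ℕ} (A : Matrix (Fin n) (Fin n) ℝ)
    (B : Matrix (Fin m) (Fin m) ℝ) (C : Matrix (Fin n) (Fin m) ℝ)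
    (a : Fin n → ℝ) (b : Fin m → ℝ) (c₀ : ℝ) (hB : B.IsSymm)
    (xs : EuclideanSpace ℝ (Fin n)) (ys u : EuclideanSpace ℝ (Fin m)) :
    quadGame A B C a b c₀ xs (ys + u) = quadGame A B C a b c₀ xs ys
      + (Cᵀ *ᵥ xs + B *ᵥ ys + b) ⬝ᵥ u + (1/2) * (u ⬝ᵥ (B *ᵥ u)) := by
  have key : ∀ (x : Fin n → ℝ) (y u : Fin m → ℝ),
      (1 / 2) * (x ⬝ᵥ (A *ᵥ x)) + (1 / 2) * ((y + u) ⬝ᵥ (B *ᵥ (y + u)))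
        + x ⬝ᵥ (C *ᵥ (y + u)) + a ⬝ᵥ x + b ⬝ᵥ (y + u) + c₀
      = ((1 / 2) * (x ⬝ᵥ (A *ᵥ x)) + (1 / 2) * (y ⬝ᵥ (B *ᵥ y)) + x ⬝ᵥ (C *ᵥ y) +
          a ⬝ᵥ x + b ⬝ᵥ y + c₀)
        + (Cᵀ *ᵥ x + B *ᵥ y + b) ⬝ᵥ u + (1/2) * (u ⬝ᵥ (B *ᵥ u)) := by
    intro x y u
    have hBy : u ⬝ᵥ (B *ᵥ y) = y ⬝ᵥ (B *ᵥ u) := by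
      rw [dotProduct_mulVec, ← mulVec_transpose, hB.eq, dotProduct_comm]
    have hC : (Cᵀ *ᵥ x) ⬝ᵥ u = x ⬝ᵥ (C *ᵥ u) := by
      rw [dotProduct_mulVec, ← mulVec_transpose]
    have hBc : y ⬝ᵥ (B *ᵥ u) = (B *ᵥ y) ⬝ᵥ u := by
      rw [← hBy, dotProduct_comm]
    simp only [mulVec_add, dotProduct_add, add_dotProduct, hC, hBy, hBc]
    ring
  exact key xs ys u

lemma QG_envU_le {n m : ℕ}
    {f : EuclideanSpace ℝ (Fin n) → EuclideanSpace ℝ (Fin m) → ℝ}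
    {ys : EuclideanSpace ℝ (Fin m)} {ε : ℝ} {x : EuclideanSpace ℝ (Fin n)} {c : ℝ}
    (h : ∀ y, ‖y - ys‖ ≤ ε → f x y ≤ c) : envU f ys ε x ≤ (c : EReal) := by
  refine iSup₂_le ?_
  intro y hy
  exact_mod_cast h y hy

lemma QG_le_envU {n m : ℕ}
    {f : EuclideanSpace ℝ (Fin n) → EuclideanSpace ℝ (Fin m) → ℝ}
    {ys : EuclideanSpace ℝ (Fin m)} {ε : ℝ} {x : EuclideanSpace ℝ (Fin n)}
    {y : EuclideanSpace ℝ (Fin m)} (hy : ‖y - ys‖ ≤ ε) :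
    ((f x y : ℝ) : EReal) ≤ envU f ys ε x :=
  le_iSup₂ (f := fun y _ => ((f x y : ℝ) : EReal)) y hy

private lemma QG_arith5 (gu β s η : ℝ) (hs : 0 < s) (hβ : s ≤ 2*η/(|β|+1))
    (hmain : s * gu + (1/2) * (s^2 * β) ≤ 0) (hη : 0 < η) : gu ≤ η := by
  have habs : 0 ≤ |β| := abs_nonneg β
  have h1 : gu ≤ -(1/2) * (s * β) := by
    have h2 : s * gu ≤ s * (-(1/2) * (s * β)) := by nlinarith
    exact (mul_le_mul_iff_right₀ hs).mp h2
  have h3 : -(1/2) * (s * β) ≤ (1/2) * (s * |β|) := by nlinarith [neg_abs_le β]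
  have h4 : s * (|β| + 1) ≤ 2*η := by
    have := mul_le_mul_of_nonneg_right hβ (by positivity : (0:ℝ) ≤ |β|+1)
    rwa [div_mul_cancel₀ _ (by positivity : |β|+1 ≠ 0)] at this
  nlinarith
private lemma QG_arith6 (dd dAd NC eps t : ℝ) (hdd : 0 < dd) (ht : 0 < t)
    (hNC : 0 ≤ NC) (heps : 0 ≤ eps)
    (h1 : t ≤ (dd/2)/(|dAd|+1)) (h2 : eps * NC < dd/4)
    (hmain : 0 ≤ -(t*dd) + (1/2)*(t^2*dAd) + t*(eps*NC)) : False := by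
  have habs : 0 ≤ |dAd| := abs_nonneg dAd
  have h3 : t * (|dAd|+1) ≤ dd/2 := by
    have := mul_le_mul_of_nonneg_right h1 (by positivity : (0:ℝ) ≤ |dAd|+1)
    rwa [div_mul_cancel₀ _ (by positivity : |dAd|+1 ≠ 0)] at this
  have h4 : (1/2)*(t^2*dAd) ≤ (1/2)*(t*(t*|dAd|)) := by nlinarith [le_abs_self dAd]
  have h5 : t*|dAd| ≤ dd/2 := by nlinarith
  nlinarith


lemma QG_dp_inner {m : ℕ} (x y : EuclideanSpace ℝ (Fin m)) : ⟪x, y⟫ = x ⬝ᵥ y := by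
  simp [PiLp.inner_apply, dotProduct, mul_comm]

lemma QG_dp_symm {m : ℕ} {B : Matrix (Fin m) (Fin m) ℝ} (hB : B.IsSymm)
    (x y : Fin m → ℝ) : x ⬝ᵥ (B *ᵥ y) = y ⬝ᵥ (B *ᵥ x) := by
  rw [dotProduct_mulVec, ← mulVec_transpose, hB.eq, dotProduct_comm]

lemma QG_dp_transfer {n m : ℕ} (C : Matrix (Fin n) (Fin m) ℝ) (x : Fin n → ℝ) (y : Fin m → ℝ) :
    x ⬝ᵥ (C *ᵥ y) = (Cᵀ *ᵥ x) ⬝ᵥ y := by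
  rw [dotProduct_mulVec, ← mulVec_transpose]

lemma QG_sq_complete {m : ℕ} {B : Matrix (Fin m) (Fin m) ℝ} (hB : B.IsSymm)
    (hBneg : ∀ s : Fin m → ℝ, s ⬝ᵥ (B *ᵥ s) ≤ 0) {v w : Fin m → ℝ} (hw : B *ᵥ v = w)
    (u : Fin m → ℝ) :
    (1/2) * (u ⬝ᵥ (B *ᵥ u)) + w ⬝ᵥ u ≤ -(1/2) * (v ⬝ᵥ w) := by
  have key : (1/2) * (u ⬝ᵥ (B *ᵥ u)) + w ⬝ᵥ u + (1/2) * (v ⬝ᵥ w)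
      = (1/2) * ((u + v) ⬝ᵥ (B *ᵥ (u + v))) := by
    subst hw
    have h1 : u ⬝ᵥ (B *ᵥ v) = v ⬝ᵥ (B *ᵥ u) := QG_dp_symm hB u v
    have h2 : (B *ᵥ v) ⬝ᵥ u = u ⬝ᵥ (B *ᵥ v) := dotProduct_comm _ _
    simp only [mulVec_add, dotProduct_add, add_dotProduct, h2, h1]
    ring
  have := hBneg (u + v)
  linarith

-- the mulVec linear map on EuclideanSpace
noncomputable def QG_mvL {k m : ℕ} (M : Matrix (Fin k) (Fin m) ℝ) :
    EuclideanSpace ℝ (Fin m) →ₗ[ℝ] EuclideanSpace ℝ (Fin k) where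
  toFun v := WithLp.toLp 2 (M *ᵥ v)
  map_add' v w := by simp [Matrix.mulVec_add]
  map_smul' t v := by simp [Matrix.mulVec_smul]

@[simp] lemma QG_mvL_apply {k m : ℕ} (M : Matrix (Fin k) (Fin m) ℝ)
    (v : EuclideanSpace ℝ (Fin m)) : QG_mvL M v = M *ᵥ v := rfl

lemma QG_exists_solution {m : ℕ} {B : Matrix (Fin m) (Fin m) ℝ} (hB : B.IsSymm)
    (w : Fin m → ℝ) (M : ℝ)
    (hM : ∀ u : Fin m → ℝ, (1/2) * (u ⬝ᵥ (B *ᵥ u)) + w ⬝ᵥ u ≤ M) :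
    ∃ v : Fin m → ℝ, B *ᵥ v = w := by
  classical
  set F := EuclideanSpace ℝ (Fin m)
  set T : F →ₗ[ℝ] F := QG_mvL B with hT
  set R : Submodule ℝ F := LinearMap.range T with hR
  obtain ⟨r, hr, z, hz, hwrz⟩ := R.exists_add_mem_mem_orthogonal (WithLp.toLp 2 w : F)
  -- z is in the kernel of T
  have hTz : B *ᵥ z = 0 := by
    have hself : ∀ x : F, ⟪x, T z⟫ = 0 := by
      intro x
      have h1 : ⟪T x, z⟫ = 0 := hz (T x) (LinearMap.mem_range_self T x)
      have h2 : ⟪T x, z⟫ = ⟪x, T z⟫ := by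
        rw [QG_dp_inner, QG_dp_inner]
        show (B *ᵥ x) ⬝ᵥ z = x ⬝ᵥ (B *ᵥ z)
        rw [dotProduct_comm, QG_dp_symm hB]
      rw [← h2, h1]
    have := hself (T z)
    rw [inner_self_eq_zero] at this
    exact congrArg WithLp.ofLp this
  have hwz : w ⬝ᵥ (z : Fin m → ℝ) = ⟪z, z⟫ := by
    have h1 : ⟪(WithLp.toLp 2 w : F), z⟫ = ⟪r, z⟫ + ⟪z, z⟫ := by rw [hwrz, inner_add_left]
    have hrz : ⟪r, z⟫ = 0 := hz r hr
    rw [hrz, zero_add] at h1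
    rw [← h1, QG_dp_inner]
  have hz0 : z = 0 := by
    by_contra hne
    have hpos : (0:ℝ) < ⟪z, z⟫ := by
      rw [real_inner_self_eq_norm_sq]
      have : 0 < ‖z‖ := norm_pos_iff.mpr hne
      positivity
    have key : ∀ t : ℝ, t * ⟪z, z⟫ ≤ M := by
      intro t
      have := hM (t • (z : Fin m → ℝ))
      have e1 : (t • (z : Fin m → ℝ)) ⬝ᵥ (B *ᵥ (t • (z : Fin m → ℝ))) = 0 := by
        rw [mulVec_smul]
        show (t • (z:Fin m → ℝ)) ⬝ᵥ (t • (B *ᵥ z)) = 0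
        rw [hTz]
        simp
      have e2 : w ⬝ᵥ (t • (z : Fin m → ℝ)) = t * (w ⬝ᵥ (z : Fin m → ℝ)) := by
        rw [dotProduct_smul]; simp
      rw [e1, e2] at this
      have : t * (w ⬝ᵥ (z : Fin m → ℝ)) ≤ M := by linarith
      rwa [hwz] at this
    have := key ((M + 1) / ⟪z, z⟫)
    rw [div_mul_cancel₀] at this
    · linarith
    · exact ne_of_gt hpos
  obtain ⟨v, hv⟩ := hr
  refine ⟨v, ?_⟩
  have hwr : (WithLp.toLp 2 w : F) = r := by rw [hwrz, hz0, add_zero]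
  rw [← hv] at hwr
  exact congrArg WithLp.ofLp hwr.symm


private lemma QG_arith1 (CL eps : ℝ) (h0 : 0 ≤ CL) (heps : 0 < eps) :
    CL * (eps / (2 * (CL + 1))) ≤ eps / 2 := by
  rw [mul_div_assoc', div_le_div_iff₀ (by positivity) (by norm_num : (0:ℝ) < 2)]
  nlinarith

private lemma QG_arith2 (x v e : ℝ) (hx : 0 ≤ x) (he : 0 < e)
    (hn : x^2 = v^2 + (e/2)^2) (hv : v ≤ e/2) (hv0 : 0 ≤ v) : x ≤ e := by
  nlinarith

private lemma QG_arith3 (a b c : ℝ) (ha : 0 ≤ a) (hb : 0 ≤ b) (hc : 0 ≤ c)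
    (h : c^2 = a^2 + b^2) : a ≤ c ∧ b ≤ c := by
  constructor <;> nlinarith

private lemma QG_arith4 (CP K3 e n1 n2 nh nz P11 P12 P21 P22 : ℝ)
    (hCP0 : 0 ≤ CP) (hK30 : 0 ≤ K3) (he : 0 < e)
    (h11 : 0 ≤ P11) (h12 : -(CP*(n1*n2)) ≤ P12) (h21 : -(CP*(n2*n1)) ≤ P21)
    (h22 : -(CP*(n2*n2)) ≤ P22)
    (hn10 : 0 ≤ n1) (hn20 : 0 ≤ n2) (hnz0 : 0 ≤ nz) (hnh0 : 0 ≤ nh)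
    (hn1h : n1 ≤ nh) (hn2h : n2 ≤ nh) (hn2z : n2 ≤ K3 * nz)
    (hhd : nh ≤ e / (6*(CP+1)*(K3+1))) :
    0 ≤ P11 + P12 + P21 + P22 + (e/2) * nz := by
  have key1 : n2 ≤ (K3+1) * nz := by nlinarith
  have key2 : nh * (6*(CP+1)*(K3+1)) ≤ e := by
    rwa [le_div_iff₀ (by positivity)] at hhd
  have key3 : 3*CP*(nh*n2) ≤ (e/2) * nz := by
    nlinarith [mul_le_mul_of_nonneg_left key1 (mul_nonneg (mul_nonneg (by norm_num : (0:ℝ) ≤ 3) hCP0) hnh0),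
      mul_le_mul_of_nonneg_right key2 hn20]
  nlinarith [mul_le_mul_of_nonneg_right hn1h hn20, mul_le_mul_of_nonneg_right hn2h hn20]

set_option maxHeartbeats 1000000 in
lemma QG_master {n m : ℕ} (A : Matrix (Fin n) (Fin n) ℝ) (B : Matrix (Fin m) (Fin m) ℝ)
    (C : Matrix (Fin n) (Fin m) ℝ) (hB : B.IsSymm)
    (HQ : ∀ (h : EuclideanSpace ℝ (Fin n)) (v : Fin m → ℝ), B *ᵥ v = Cᵀ *ᵥ h →
      0 ≤ (1/2) * (h ⬝ᵥ (A *ᵥ h)) - (1/2) * (v ⬝ᵥ (Cᵀ *ᵥ h)))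
    {ε : ℝ} (hε : 0 < ε) :
    ∃ δ > (0:ℝ), ∀ h : EuclideanSpace ℝ (Fin n), ‖h‖ ≤ δ →
      ∃ u : EuclideanSpace ℝ (Fin m), ‖u‖ ≤ ε ∧
        0 ≤ (1/2) * (h ⬝ᵥ (A *ᵥ h)) + (1/2) * (u ⬝ᵥ (B *ᵥ u)) + h ⬝ᵥ (C *ᵥ u) := by
  classical
  set E := EuclideanSpace ℝ (Fin n)
  set F := EuclideanSpace ℝ (Fin m)
  set T : F →ₗ[ℝ] F := QG_mvL B with hTdef
  set W : E →ₗ[ℝ] F := QG_mvL Cᵀ with hWdef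
  set K : Submodule ℝ F := LinearMap.ker T with hKdef
  set R : Submodule ℝ F := LinearMap.range T with hRdef
  have hTsym : ∀ x y : F, ⟪T x, y⟫ = ⟪x, T y⟫ := by
    intro x y
    rw [QG_dp_inner, QG_dp_inner]
    show (B *ᵥ x) ⬝ᵥ y = x ⬝ᵥ (B *ᵥ y)
    rw [dotProduct_comm, QG_dp_symm hB]
  have hRK : Rᗮ = K := by
    ext z
    constructor
    · intro hz
      have hself : ∀ x : F, ⟪x, T z⟫ = 0 := by
        intro x
        rw [← hTsym]
        exact hz (T x) (LinearMap.mem_range_self T x)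
      have := hself (T z)
      rw [inner_self_eq_zero] at this
      exact this
    · intro hz
      intro u hu
      obtain ⟨x, rfl⟩ := hu
      rw [hTsym]
      rw [LinearMap.mem_ker.mp hz]
      exact inner_zero_right x
  -- the restricted linear equivalence
  have memR : ∀ x : Kᗮ, T (x : F) ∈ R := fun x => LinearMap.mem_range_self T (x : F)
  set T' : Kᗮ →ₗ[ℝ] R := (T.domRestrict Kᗮ).codRestrict R (fun x => memR x) with hT'def
  have hT'coe : ∀ x : Kᗮ, (T' x : F) = T (x : F) := fun x => rfl
  have hinj : Function.Injective T' := by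
    intro x y hxy
    have h1 : T (x : F) = T (y : F) := by
      rw [← hT'coe, ← hT'coe, hxy]
    have h2 : ((x : F) - y) ∈ K := LinearMap.mem_ker.mpr (by rw [map_sub, h1, sub_self])
    have h3 : ((x : F) - y) ∈ Kᗮ := sub_mem x.2 y.2
    have h4 : ((x : F) - y) = 0 := by
      have := h3 _ h2
      rwa [inner_self_eq_zero] at this
    exact Subtype.ext (sub_eq_zero.mp h4)
  have hsurj : Function.Surjective T' := by
    rintro ⟨r, hr⟩
    obtain ⟨y, rfl⟩ := hr
    obtain ⟨k, hk, y', hy', hsum⟩ := K.exists_add_mem_mem_orthogonal y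
    refine ⟨⟨y', hy'⟩, ?_⟩
    apply Subtype.ext
    show T y' = T y
    rw [hsum, map_add, LinearMap.mem_ker.mp hk, zero_add]
  set e : Kᗮ ≃ₗ[ℝ] R := LinearEquiv.ofBijective T' ⟨hinj, hsurj⟩ with hedef
  set P := R.orthogonalProjectionOnto with hPdef
  set L : E →ₗ[ℝ] F :=
    Kᗮ.subtype.comp ((e.symm.toLinearMap).comp ((P.toLinearMap).comp W)) with hLdef
  have hLmem : ∀ h : E, L h ∈ Kᗮ := fun h => (e.symm (P (W h))).2
  have hTL : ∀ h : E, T (L h) = (P (W h) : F) := by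
    intro h
    show T ((e.symm (P (W h)) : Kᗮ) : F) = _
    rw [← hT'coe]
    have : T' (e.symm (P (W h))) = e (e.symm (P (W h))) := rfl
    rw [this, e.apply_symm_apply]
  set Z : E →ₗ[ℝ] F := W - T.comp L with hZdef
  have hZeq : ∀ h : E, Z h = W h - T (L h) := fun h => rfl
  have hZmem : ∀ h : E, Z h ∈ K := by
    intro h
    rw [← hRK]
    have := Submodule.sub_starProjection_mem_orthogonal (K := R) (W h)
    rw [hZeq, hTL]
    exact this
  have hTapp : ∀ v : F, T v = B *ᵥ v := fun _ => rfl
  have hWapp : ∀ x : E, W x = Cᵀ *ᵥ (x : Fin n → ℝ) := fun _ => rfl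
  have hAapp : ∀ x : E, QG_mvL A x = A *ᵥ (x : Fin n → ℝ) := fun _ => rfl
  -- constants
  set Lc := LinearMap.toContinuousLinearMap L with hLc
  set Wc := LinearMap.toContinuousLinearMap W with hWc
  set Ac := LinearMap.toContinuousLinearMap (QG_mvL A) with hAc
  set Zc := LinearMap.toContinuousLinearMap Z with hZc
  set CL : ℝ := ‖Lc‖ with hCL
  have hLbound : ∀ h : E, ‖L h‖ ≤ CL * ‖h‖ := fun h => Lc.le_opNorm h
  have hCLpos : 0 ≤ CL := norm_nonneg _
  -- the quadratic form Q and its bilinear version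
  set Φ : E → E → ℝ := fun h h' => (1/2) * ⟪h, QG_mvL A h'⟫ - (1/2) * ⟪L h, W h'⟫ with hΦdef
  have hΦbound : ∀ h h' : E, |Φ h h'| ≤ ((1/2) * ‖Ac‖ + (1/2) * (CL * ‖Wc‖)) * (‖h‖ * ‖h'‖) := by
    intro h h'
    have b1 : |⟪h, QG_mvL A h'⟫| ≤ ‖h‖ * (‖Ac‖ * ‖h'‖) := by
      calc |⟪h, QG_mvL A h'⟫| ≤ ‖h‖ * ‖QG_mvL A h'‖ := abs_real_inner_le_norm _ _
      _ ≤ ‖h‖ * (‖Ac‖ * ‖h'‖) := by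
          have := Ac.le_opNorm h'
          have hn : ‖QG_mvL A h'‖ ≤ ‖Ac‖ * ‖h'‖ := this
          exact mul_le_mul_of_nonneg_left hn (norm_nonneg _)
    have b2 : |⟪L h, W h'⟫| ≤ (CL * ‖h‖) * (‖Wc‖ * ‖h'‖) := by
      calc |⟪L h, W h'⟫| ≤ ‖L h‖ * ‖W h'‖ := abs_real_inner_le_norm _ _
      _ ≤ (CL * ‖h‖) * (‖Wc‖ * ‖h'‖) := by
          apply mul_le_mul (hLbound h) (Wc.le_opNorm h') (norm_nonneg _)
          positivity
    calc |Φ h h'| ≤ (1/2) * |⟪h, QG_mvL A h'⟫| + (1/2) * |⟪L h, W h'⟫| := by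
          rw [hΦdef]
          calc |(1/2) * ⟪h, QG_mvL A h'⟫ - (1/2) * ⟪L h, W h'⟫|
              ≤ |(1/2) * ⟪h, QG_mvL A h'⟫| + |(1/2) * ⟪L h, W h'⟫| := abs_sub _ _
          _ = (1/2) * |⟪h, QG_mvL A h'⟫| + (1/2) * |⟪L h, W h'⟫| := by
              rw [abs_mul, abs_mul, abs_of_pos (by norm_num : (0:ℝ) < 1/2)]
    _ ≤ (1/2) * (‖h‖ * (‖Ac‖ * ‖h'‖)) + (1/2) * ((CL * ‖h‖) * (‖Wc‖ * ‖h'‖)) := by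
        have c1 := mul_le_mul_of_nonneg_left b1 (by norm_num : (0:ℝ) ≤ 1/2)
        have c2 := mul_le_mul_of_nonneg_left b2 (by norm_num : (0:ℝ) ≤ 1/2)
        exact add_le_add c1 c2
    _ = ((1/2) * ‖Ac‖ + (1/2) * (CL * ‖Wc‖)) * (‖h‖ * ‖h'‖) := by ring
  set CΦ : ℝ := (1/2) * ‖Ac‖ + (1/2) * (CL * ‖Wc‖) with hCΦ
  have hCΦ0 : 0 ≤ CΦ := by positivity
  have hΦadd : ∀ x y x' y' : E, Φ (x + y) (x' + y')
      = Φ x x' + Φ x y' + Φ y x' + Φ y y' := by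
    intro x y x' y'
    simp only [hΦdef, map_add, inner_add_left, inner_add_right]
    ring
  set Z' : Submodule ℝ E := LinearMap.ker Z with hZ'def
  have hQpos : ∀ h : E, Z h = 0 → 0 ≤ Φ h h := by
    intro h hzh
    have hBv : B *ᵥ (L h : Fin m → ℝ) = Cᵀ *ᵥ (h : Fin n → ℝ) := by
      have h1 : T (L h) = W h := by
        have h2 := hZeq h
        rw [hzh] at h2
        have h3 := h2.symm
        rwa [sub_eq_zero, eq_comm] at h3
      exact congrArg WithLp.ofLp h1
    have := HQ h (L h) hBv
    have e3 : ⟪h, QG_mvL A h⟫ = h ⬝ᵥ (A *ᵥ h) := QG_dp_inner h (QG_mvL A h)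
    have e4 : ⟪L h, W h⟫ = (L h : Fin m → ℝ) ⬝ᵥ (Cᵀ *ᵥ (h : Fin n → ℝ)) :=
      QG_dp_inner (L h) (W h)
    rw [hΦdef]
    dsimp only
    rw [e3, e4]
    linarith
  -- the K₃ bound on Z'ᗮ
  have hinj₂ : Function.Injective (Z.domRestrict Z'ᗮ) := by
    intro x y hxy
    have h1 : Z ((x : E) - y) = 0 := by
      rw [map_sub]
      have : Z (x : E) = Z (y : E) := hxy
      rw [this, sub_self]
    have h2 : ((x : E) - y) ∈ Z' := LinearMap.mem_ker.mpr h1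
    have h3 : ((x : E) - y) ∈ Z'ᗮ := sub_mem x.2 y.2
    have h4 : ((x : E) - y) = 0 := by
      have := h3 _ h2
      rwa [inner_self_eq_zero] at this
    exact Subtype.ext (sub_eq_zero.mp h4)
  set e₂ := LinearEquiv.ofInjective (Z.domRestrict Z'ᗮ) hinj₂ with he₂
  set e₂c := LinearMap.toContinuousLinearMap (e₂.symm.toLinearMap) with he₂c
  set K₃ : ℝ := ‖e₂c‖ with hK₃def
  have hK₃0 : 0 ≤ K₃ := hK₃def ▸ ContinuousLinearMap.opNorm_nonneg _
  have hK₃ : ∀ x : E, x ∈ Z'ᗮ → ‖x‖ ≤ K₃ * ‖Z x‖ := by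
    intro x hx
    have h1 : e₂.symm (e₂ ⟨x, hx⟩) = ⟨x, hx⟩ := e₂.symm_apply_apply _
    have h2 : ‖e₂.symm (e₂ ⟨x, hx⟩)‖ ≤ K₃ * ‖e₂ ⟨x, hx⟩‖ := e₂c.le_opNorm _
    rw [h1] at h2
    have h3 : ‖(⟨x, hx⟩ : Z'ᗮ)‖ = ‖x‖ := rfl
    have h4 : ‖e₂ ⟨x, hx⟩‖ = ‖Z x‖ := rfl
    rw [h3, h4] at h2
    exact h2
  -- make constants opaque to speed up arithmetic tactics
  clear_value CL CΦ K₃ Lc Wc Ac Zc e₂c e₂ Φ Z Z' L e T' P W T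
  -- choose δ
  refine ⟨min (ε / (2 * (CL + 1))) (ε / (6 * (CΦ + 1) * (K₃ + 1))),
    lt_min (div_pos hε (by linarith)) (div_pos hε (by nlinarith)), ?_⟩
  intro h hh
  have hhδ1 : ‖h‖ ≤ ε / (2 * (CL + 1)) := le_trans hh (min_le_left _ _)
  have hhδ2 : ‖h‖ ≤ ε / (6 * (CΦ + 1) * (K₃ + 1)) := le_trans hh (min_le_right _ _)
  have hvbound : ‖L h‖ ≤ ε / 2 :=
    le_trans (hLbound h) (le_trans (mul_le_mul_of_nonneg_left hhδ1 hCLpos)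
      (QG_arith1 CL ε hCLpos hε))
  by_cases hz0 : Z h = 0
  · -- easy case : u = -(L h)
    refine ⟨-(L h), ?_, ?_⟩
    · rw [norm_neg]
      exact le_trans hvbound (by linarith)
    · have hBv : B *ᵥ (L h : Fin m → ℝ) = Cᵀ *ᵥ (h : Fin n → ℝ) := by
        have h1 : T (L h) = W h := by
          have h2 := hZeq h
          rw [hz0] at h2
          have h3 := h2.symm
          rwa [sub_eq_zero, eq_comm] at h3
        rw [← hTapp, ← hWapp]
        exact congrArg WithLp.ofLp h1
      have hQ := HQ h (L h) hBv
      set v : Fin m → ℝ := (L h : Fin m → ℝ) with hvdef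
      set w : Fin m → ℝ := Cᵀ *ᵥ (h : Fin n → ℝ) with hwdef
      have c1 : ((-(L h) : F) : Fin m → ℝ) ⬝ᵥ (B *ᵥ ((-(L h) : F) : Fin m → ℝ))
          = v ⬝ᵥ w := by
        show (-v) ⬝ᵥ (B *ᵥ (-v)) = v ⬝ᵥ w
        rw [mulVec_neg, dotProduct_neg, neg_dotProduct, neg_neg, hBv]
      have c2 : (h : Fin n → ℝ) ⬝ᵥ (C *ᵥ ((-(L h) : F) : Fin m → ℝ)) = -(v ⬝ᵥ w) := by
        show (h : Fin n → ℝ) ⬝ᵥ (C *ᵥ (-v)) = -(v ⬝ᵥ w)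
        rw [QG_dp_transfer, dotProduct_neg, ← hwdef, dotProduct_comm]
      rw [c1, c2]
      linarith
  · -- hard case
    have hZpos : 0 < ‖Z h‖ := norm_pos_iff.mpr hz0
    set t : ℝ := (ε / 2) / ‖Z h‖ with htdef
    have ht0 : 0 < t := by positivity
    have htz : t * ‖Z h‖ = ε / 2 := div_mul_cancel₀ _ (ne_of_gt hZpos)
    set u : F := -(L h) + t • Z h with hudef
    -- inner product facts
    have hTz0 : T (Z h) = 0 := LinearMap.mem_ker.mp (hZmem h)
    have hTv : T (L h) = W h - Z h := by rw [hZeq h]; abel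
    have hLZ : ⟪L h, Z h⟫ = 0 := by
      rw [real_inner_comm]
      exact (hLmem h) (Z h) (hZmem h)
    have hZTL : ⟪Z h, T (L h)⟫ = 0 := by
      rw [← hTsym (Z h) (L h), hTz0]
      exact inner_zero_left _
    have hZW : ⟪Z h, W h⟫ = ‖Z h‖ ^ 2 := by
      have hW : W h = T (L h) + Z h := by rw [hTv]; abel
      rw [hW, inner_add_right, hZTL, zero_add, real_inner_self_eq_norm_sq]
    have hTu : T u = Z h - W h := by
      rw [hudef, map_add, map_neg, _root_.map_smul, hTz0, smul_zero, add_zero, hTv]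
      abel
    have e1 : (u : Fin m → ℝ) ⬝ᵥ (B *ᵥ (u : Fin m → ℝ)) = ⟪L h, W h⟫ := by
      have i1 : ⟪u, T u⟫ = u ⬝ᵥ (B *ᵥ (u : Fin m → ℝ)) := by
        rw [← hTapp u]
        exact QG_dp_inner u (T u)
      rw [← i1, hTu, hudef]
      rw [inner_add_left, inner_neg_left, real_inner_smul_left, inner_sub_right,
        inner_sub_right, hLZ, real_inner_self_eq_norm_sq, hZW]
      ring
    have e2 : (h : Fin n → ℝ) ⬝ᵥ (C *ᵥ (u : Fin m → ℝ)) = -⟪L h, W h⟫ + t * ‖Z h‖^2 := by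
      rw [QG_dp_transfer]
      have i2 : (Cᵀ *ᵥ (h : Fin n → ℝ)) ⬝ᵥ (u : Fin m → ℝ) = ⟪W h, u⟫ := by
        rw [QG_dp_inner, hWapp]
      rw [i2, hudef, inner_add_right, inner_neg_right, real_inner_smul_right]
      have w1 : ⟪W h, L h⟫ = ⟪L h, W h⟫ := real_inner_comm _ _
      have w2 : ⟪W h, Z h⟫ = ‖Z h‖^2 := by rw [real_inner_comm]; exact hZW
      rw [w1, w2]
    have e3 : (h : Fin n → ℝ) ⬝ᵥ (A *ᵥ (h : Fin n → ℝ)) = ⟪h, QG_mvL A h⟫ := by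
      exact (QG_dp_inner h (QG_mvL A h)).symm
    refine ⟨u, ?_, ?_⟩
    · -- norm bound on u
      have hnu : ‖u‖^2 = ‖L h‖^2 + (ε/2)^2 := by
        rw [hudef, norm_add_sq_real, norm_neg, inner_neg_left, real_inner_smul_right,
          hLZ, norm_smul, Real.norm_eq_abs]
        have habs : (|t| * ‖Z h‖)^2 = (t * ‖Z h‖)^2 := by
          rw [mul_pow, mul_pow, sq_abs]
        rw [habs, htz]
        ring
      exact QG_arith2 ‖u‖ ‖L h‖ ε (norm_nonneg u) hε hnu hvbound (norm_nonneg _)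
    · -- the value inequality
      rw [e3, e1, e2]
      have hΦhh : Φ h h = (1/2) * ⟪h, QG_mvL A h⟫ - (1/2) * ⟪L h, W h⟫ := by
        rw [hΦdef]
      have goal2 : 0 ≤ Φ h h + t * ‖Z h‖^2 := by
        obtain ⟨h₁, hh₁, h₂, hh₂, hsum⟩ := Z'.exists_add_mem_mem_orthogonal h
        have hZh₁ : Z h₁ = 0 := by
          have := hh₁
          rw [hZ'def] at this
          exact LinearMap.mem_ker.mp this
        have hQ1 : 0 ≤ Φ h₁ h₁ := hQpos h₁ hZh₁
        have hinner12 : ⟪h₁, h₂⟫ = 0 := hh₂ h₁ hh₁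
        have hZh2 : Z h = Z h₂ := by rw [hsum, map_add, hZh₁, zero_add]
        have hn2z : ‖h₂‖ ≤ K₃ * ‖Z h‖ := by rw [hZh2]; exact hK₃ h₂ hh₂
        have hsq : ‖h‖^2 = ‖h₁‖^2 + ‖h₂‖^2 := by
          rw [hsum, norm_add_sq_real, hinner12]
          ring
        obtain ⟨hn1h, hn2h⟩ := QG_arith3 ‖h₁‖ ‖h₂‖ ‖h‖ (norm_nonneg _)
          (norm_nonneg _) (norm_nonneg _) hsq
        have hΦh : Φ h h = Φ h₁ h₁ + Φ h₁ h₂ + Φ h₂ h₁ + Φ h₂ h₂ := by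
          rw [hsum]
          exact hΦadd h₁ h₂ h₁ h₂
        have b12 : -(CΦ * (‖h₁‖ * ‖h₂‖)) ≤ Φ h₁ h₂ := neg_le_of_abs_le (hΦbound h₁ h₂)
        have b21 : -(CΦ * (‖h₂‖ * ‖h₁‖)) ≤ Φ h₂ h₁ := neg_le_of_abs_le (hΦbound h₂ h₁)
        have b22 : -(CΦ * (‖h₂‖ * ‖h₂‖)) ≤ Φ h₂ h₂ := neg_le_of_abs_le (hΦbound h₂ h₂)
        have htznorm : t * ‖Z h‖^2 = (ε/2) * ‖Z h‖ := by
          rw [pow_two, ← mul_assoc, htz]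
        rw [hΦh, htznorm]
        exact QG_arith4 CΦ K₃ ε ‖h₁‖ ‖h₂‖ ‖h‖ ‖Z h‖ (Φ h₁ h₁) (Φ h₁ h₂) (Φ h₂ h₁)
          (Φ h₂ h₂) hCΦ0 hK₃0 hε hQ1 b12 b21 b22 (norm_nonneg _) (norm_nonneg _)
          (norm_nonneg _) (norm_nonneg _) hn1h hn2h hn2z hhδ2
      rw [hΦhh] at goal2
      linarith


end QGAux

set_option maxHeartbeats 4000000 in
/-- For quadratic games, `(x*, y*)` is local minimax iff it is stationary and global
minimax; in particular, every local minimax point is global minimax. -/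
theorem quadGame_localMinimax_iff_stationary_and_globalMinimax {n m : ℕ}
    (A : Matrix (Fin n) (Fin n) ℝ) (B : Matrix (Fin m) (Fin m) ℝ)
    (C : Matrix (Fin n) (Fin m) ℝ) (a : Fin n → ℝ) (b : Fin m → ℝ) (c₀ : ℝ)
    (hA : A.IsSymm) (hB : B.IsSymm)
    (xstar : EuclideanSpace ℝ (Fin n)) (ystar : EuclideanSpace ℝ (Fin m)) :
    (IsLocalMinimax (quadGame A B C a b c₀) xstar ystar ↔
      ((A *ᵥ xstar + C *ᵥ ystar + a = 0 ∧ Cᵀ *ᵥ xstar + B *ᵥ ystar + b = 0) ∧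
        IsGlobalMinimax (quadGame A B C a b c₀) xstar ystar)) ∧
    (IsLocalMinimax (quadGame A B C a b c₀) xstar ystar →
      IsGlobalMinimax (quadGame A B C a b c₀) xstar ystar) := by
  classical
  have main : IsLocalMinimax (quadGame A B C a b c₀) xstar ystar ↔
      ((A *ᵥ xstar + C *ᵥ ystar + a = 0 ∧ Cᵀ *ᵥ xstar + B *ᵥ ystar + b = 0) ∧
        IsGlobalMinimax (quadGame A B C a b c₀) xstar ystar) := by
    constructor
    · intro hloc
      obtain ⟨⟨ε₀, hε₀, hy⟩, εs, hεpos, hεlim, hlocx⟩ := hloc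
      -- Step A: analysis of the local maximality in y
      have hq_y : ∀ u : Fin m → ℝ, ‖(WithLp.toLp 2 (u) : EuclideanSpace ℝ (Fin m))‖ ≤ ε₀ →
          (Cᵀ *ᵥ (xstar : Fin n → ℝ) + B *ᵥ (ystar : Fin m → ℝ) + b) ⬝ᵥ u
            + (1/2) * (u ⬝ᵥ (B *ᵥ u)) ≤ 0 := by
        intro u hu
        have h1 := hy (ystar + (WithLp.toLp 2 (u) : EuclideanSpace ℝ (Fin m)))
          (by rw [add_sub_cancel_left]; exact hu)
        rw [quadGame_expand_y A B C a b c₀ hB xstar ystar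
          (WithLp.toLp 2 (u) : EuclideanSpace ℝ (Fin m))] at h1
        linarith
      have hdp : ∀ (u : Fin m → ℝ) (s : ℝ),
          (Cᵀ *ᵥ (xstar : Fin n → ℝ) + B *ᵥ (ystar : Fin m → ℝ) + b) ⬝ᵥ (s • u)
            + (1/2) * ((s • u) ⬝ᵥ (B *ᵥ (s • u)))
          = s * ((Cᵀ *ᵥ (xstar : Fin n → ℝ) + B *ᵥ (ystar : Fin m → ℝ) + b) ⬝ᵥ u)
            + (1/2) * (s^2 * (u ⬝ᵥ (B *ᵥ u))) := by
        intro u s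
        rw [mulVec_smul, dotProduct_smul, smul_dotProduct, dotProduct_smul]
        simp only [smul_eq_mul]
        ring
      have hsmul_norm : ∀ (u : Fin m → ℝ) (s : ℝ),
          |s| * ‖(WithLp.toLp 2 (u) : EuclideanSpace ℝ (Fin m))‖ ≤ ε₀ →
          ‖(WithLp.toLp 2 (s • u) : EuclideanSpace ℝ (Fin m))‖ ≤ ε₀ := by
        intro u s hs
        have heq : (WithLp.toLp 2 (s • u) : EuclideanSpace ℝ (Fin m))
            = s • (WithLp.toLp 2 (u) : EuclideanSpace ℝ (Fin m)) := rfl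
        rw [heq, norm_smul, Real.norm_eq_abs]
        exact hs
      have hBneg : ∀ u : Fin m → ℝ, u ⬝ᵥ (B *ᵥ u) ≤ 0 := by
        intro u
        have hnu0 : 0 ≤ ‖(WithLp.toLp 2 (u) : EuclideanSpace ℝ (Fin m))‖ := norm_nonneg _
        set nu : ℝ := ‖(WithLp.toLp 2 (u) : EuclideanSpace ℝ (Fin m))‖ with hnu
        have hs0 : 0 < ε₀ / (nu + 1) := by positivity
        have hcancel : (ε₀/(nu+1)) * (nu+1) = ε₀ := div_mul_cancel₀ _ (by positivity)
        have hbound : ∀ s : ℝ, |s| ≤ ε₀/(nu+1) → |s| * nu ≤ ε₀ := by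
          intro s hs
          nlinarith [abs_nonneg s, mul_le_mul_of_nonneg_right hs
            (by positivity : (0:ℝ) ≤ nu+1)]
        have hp := hq_y ((ε₀/(nu+1)) • u)
          (hsmul_norm u _ (hbound _ (by rw [abs_of_pos hs0])))
        have hm := hq_y ((-(ε₀/(nu+1))) • u)
          (hsmul_norm u _ (hbound _ (by rw [abs_neg, abs_of_pos hs0])))
        rw [hdp] at hp hm
        have hsum : (ε₀/(nu+1))^2 * (u ⬝ᵥ (B *ᵥ u)) ≤ 0 := by nlinarith
        by_contra hpos
        push_neg at hpos
        nlinarith [mul_pos (pow_pos hs0 2) hpos]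
      have hgzero : Cᵀ *ᵥ (xstar : Fin n → ℝ) + B *ᵥ (ystar : Fin m → ℝ) + b = 0 := by
        set g : Fin m → ℝ :=
          Cᵀ *ᵥ (xstar : Fin n → ℝ) + B *ᵥ (ystar : Fin m → ℝ) + b with hgdef
        have hkey : ∀ u : Fin m → ℝ, g ⬝ᵥ u ≤ 0 := by
          intro u
          have hnu0 : 0 ≤ ‖(WithLp.toLp 2 (u) : EuclideanSpace ℝ (Fin m))‖ := norm_nonneg _
          set nu : ℝ := ‖(WithLp.toLp 2 (u) : EuclideanSpace ℝ (Fin m))‖ with hnu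
          refine le_of_forall_pos_le_add ?_
          intro η hη
          set s : ℝ := min (ε₀/(nu+1)) (2*η/(|u ⬝ᵥ (B *ᵥ u)|+1)) with hsdef
          have hs0 : 0 < s := lt_min (by positivity) (by positivity)
          have hcancel : (ε₀/(nu+1)) * (nu+1) = ε₀ := div_mul_cancel₀ _ (by positivity)
          have hsn : |s| * nu ≤ ε₀ := by
            rw [abs_of_pos hs0]
            nlinarith [min_le_left (ε₀/(nu+1)) (2*η/(|u ⬝ᵥ (B *ᵥ u)|+1)),
              mul_le_mul_of_nonneg_right
                (min_le_left (ε₀/(nu+1)) (2*η/(|u ⬝ᵥ (B *ᵥ u)|+1)))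
                (by positivity : (0:ℝ) ≤ nu+1)]
          have hp := hq_y (s • u) (hsmul_norm u s hsn)
          rw [hdp] at hp
          have := QG_arith5 (g ⬝ᵥ u) (u ⬝ᵥ (B *ᵥ u)) s η hs0 (min_le_right _ _) hp hη
          linarith
        have hall : ∀ u : Fin m → ℝ, g ⬝ᵥ u = 0 := by
          intro u
          have h1 := hkey u
          have h2 := hkey (-u)
          rw [dotProduct_neg] at h2
          linarith
        have := hall g
        rwa [dotProduct_self_eq_zero] at this
      -- Step B: x-stationarity
      have hdzero : A *ᵥ (xstar : Fin n → ℝ) + C *ᵥ (ystar : Fin m → ℝ) + a = 0 := by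
        by_contra hdne
        set d : Fin n → ℝ :=
          A *ᵥ (xstar : Fin n → ℝ) + C *ᵥ (ystar : Fin m → ℝ) + a with hddef
        have hdd : 0 < d ⬝ᵥ d := by
          have h1 : d ⬝ᵥ d = ‖(WithLp.toLp 2 (d) : EuclideanSpace ℝ (Fin n))‖^2 := by
            rw [← real_inner_self_eq_norm_sq, QG_dp_inner]
          rw [h1]
          have h2 : (WithLp.toLp 2 (d) : EuclideanSpace ℝ (Fin n)) ≠ 0 := fun h => hdne (congrArg WithLp.ofLp h)
          have h3 : 0 < ‖(WithLp.toLp 2 (d) : EuclideanSpace ℝ (Fin n))‖ := norm_pos_iff.mpr h2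
          positivity
        set NCd : ℝ := ‖(WithLp.toLp 2 (Cᵀ *ᵥ d) : EuclideanSpace ℝ (Fin m))‖ with hNCddef
        have hNCd0 : 0 ≤ NCd := norm_nonneg _
        obtain ⟨k, hk⟩ : ∃ k, εs k * NCd < (d ⬝ᵥ d)/4 := by
          have hev : ∀ᶠ k in atTop, εs k < ((d ⬝ᵥ d)/4)/(NCd+1) :=
            hεlim.eventually (gt_mem_nhds (by positivity))
          obtain ⟨k, hk⟩ := hev.exists
          refine ⟨k, ?_⟩
          have h2 : εs k * NCd ≤ εs k * (NCd+1) := by nlinarith [(hεpos k).le]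
          have h3 : εs k * (NCd+1) < (((d ⬝ᵥ d)/4)/(NCd+1)) * (NCd+1) :=
            mul_lt_mul_of_pos_right hk (by positivity)
          rw [div_mul_cancel₀ _ (by positivity : NCd+1 ≠ 0)] at h3
          linarith
        obtain ⟨δ, hδ0, hδ⟩ := hlocx k
        have hnd0 : 0 ≤ ‖(WithLp.toLp 2 (d) : EuclideanSpace ℝ (Fin n))‖ := norm_nonneg _
        set t : ℝ := min (δ / (‖(WithLp.toLp 2 (d) : EuclideanSpace ℝ (Fin n))‖ + 1))
          (((d ⬝ᵥ d)/2) / (|d ⬝ᵥ (A *ᵥ d)| + 1)) with htdef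
        have ht0 : 0 < t := lt_min (by positivity) (by positivity)
        set hv : Fin n → ℝ := (-t) • d with hhv
        have hnormh : ‖(WithLp.toLp 2 (hv) : EuclideanSpace ℝ (Fin n))‖
            = t * ‖(WithLp.toLp 2 (d) : EuclideanSpace ℝ (Fin n))‖ := by
          have heq : (WithLp.toLp 2 (hv) : EuclideanSpace ℝ (Fin n))
              = (-t) • (WithLp.toLp 2 (d) : EuclideanSpace ℝ (Fin n)) := rfl
          rw [heq, norm_smul, Real.norm_eq_abs, abs_neg, abs_of_pos ht0]
        have hδh : ‖(xstar + (WithLp.toLp 2 (hv) : EuclideanSpace ℝ (Fin n))) - xstar‖ ≤ δ := by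
          rw [add_sub_cancel_left, hnormh]
          have hcancel : (δ / (‖(WithLp.toLp 2 (d) : EuclideanSpace ℝ (Fin n))‖+1))
              * (‖(WithLp.toLp 2 (d) : EuclideanSpace ℝ (Fin n))‖+1) = δ :=
            div_mul_cancel₀ _ (by positivity)
          nlinarith [min_le_left (δ / (‖(WithLp.toLp 2 (d) : EuclideanSpace ℝ (Fin n))‖ + 1))
              (((d ⬝ᵥ d)/2) / (|d ⬝ᵥ (A *ᵥ d)| + 1)),
            mul_le_mul_of_nonneg_right
              (min_le_left (δ / (‖(WithLp.toLp 2 (d) : EuclideanSpace ℝ (Fin n))‖ + 1))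
                (((d ⬝ᵥ d)/2) / (|d ⬝ᵥ (A *ᵥ d)| + 1)))
              (by positivity : (0:ℝ) ≤ ‖(WithLp.toLp 2 (d) : EuclideanSpace ℝ (Fin n))‖+1)]
        have hlow : ((quadGame A B C a b c₀ xstar ystar : ℝ) : EReal)
            ≤ envU (quadGame A B C a b c₀) ystar (εs k) xstar :=
          QG_le_envU (by rw [sub_self, norm_zero]; exact (hεpos k).le)
        have hupp : envU (quadGame A B C a b c₀) ystar (εs k)
              (xstar + (WithLp.toLp 2 (hv) : EuclideanSpace ℝ (Fin n)))
            ≤ ((quadGame A B C a b c₀ xstar ystar + d ⬝ᵥ hv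
                + (1/2) * (hv ⬝ᵥ (A *ᵥ hv)) + t * (εs k * NCd) : ℝ) : EReal) := by
          apply QG_envU_le
          intro y hyb
          have e := quadGame_expand A B C a b c₀ hA hB xstar
            (WithLp.toLp 2 (hv) : EuclideanSpace ℝ (Fin n)) ystar (y - ystar)
          rw [show ystar + (y - ystar) = y from by abel] at e
          rw [e, hgzero, zero_dotProduct]
          have hBu := hBneg (WithLp.ofLp (y - ystar))
          have hcross : (hv : Fin n → ℝ) ⬝ᵥ (C *ᵥ (WithLp.ofLp (y - ystar)))
              ≤ t * (εs k * NCd) := by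
            rw [QG_dp_transfer]
            have h1 : Cᵀ *ᵥ hv = (-t) • (Cᵀ *ᵥ d) := by rw [hhv, mulVec_smul]
            rw [h1, smul_dotProduct]
            have h2 : |(Cᵀ *ᵥ d) ⬝ᵥ (WithLp.ofLp (y - ystar))| ≤ NCd * (εs k) := by
              have h3 : (Cᵀ *ᵥ d) ⬝ᵥ (WithLp.ofLp (y - ystar))
                  = ⟪(WithLp.toLp 2 (Cᵀ *ᵥ d) : EuclideanSpace ℝ (Fin m)), y - ystar⟫ :=
                (QG_dp_inner (WithLp.toLp 2 (Cᵀ *ᵥ d)) (y - ystar)).symm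
              rw [h3]
              calc |⟪(WithLp.toLp 2 (Cᵀ *ᵥ d) : EuclideanSpace ℝ (Fin m)), y - ystar⟫|
                  ≤ NCd * ‖y - ystar‖ := abs_real_inner_le_norm _ _
              _ ≤ NCd * (εs k) := mul_le_mul_of_nonneg_left hyb hNCd0
            have h4 := neg_abs_le ((Cᵀ *ᵥ d) ⬝ᵥ (WithLp.ofLp (y - ystar)))
            simp only [smul_eq_mul]
            nlinarith [ht0.le]
          simp only [WithLp.ofLp_toLp]
          linarith
        have hchain := le_trans hlow (le_trans (hδ _ hδh) hupp)
        rw [EReal.coe_le_coe_iff] at hchain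
        have hd1 : d ⬝ᵥ hv = -(t * (d ⬝ᵥ d)) := by
          rw [hhv, dotProduct_smul]
          simp only [smul_eq_mul]
          ring
        have hd2 : hv ⬝ᵥ (A *ᵥ hv) = t^2 * (d ⬝ᵥ (A *ᵥ d)) := by
          rw [hhv, mulVec_smul, dotProduct_smul, smul_dotProduct]
          simp only [smul_eq_mul]
          ring
        rw [hd1, hd2] at hchain
        exact QG_arith6 (d ⬝ᵥ d) (d ⬝ᵥ (A *ᵥ d)) NCd (εs k) t hdd ht0 hNCd0
          (hεpos k).le (min_le_right _ _) hk (by linarith)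
      -- Step C: global minimaxity
      have hglob1 : ∀ y, quadGame A B C a b c₀ xstar y
          ≤ quadGame A B C a b c₀ xstar ystar := by
        intro y
        have e := quadGame_expand_y A B C a b c₀ hB xstar ystar (y - ystar)
        rw [show ystar + (y - ystar) = y from by abel] at e
        rw [e, hgzero, zero_dotProduct]
        linarith [hBneg (WithLp.ofLp (y - ystar))]
      have hglob2 : ∀ x (c : ℝ), (∀ y, quadGame A B C a b c₀ x y ≤ c) →
          quadGame A B C a b c₀ xstar ystar ≤ c := by
        intro x c hc
        set h : EuclideanSpace ℝ (Fin n) := x - xstar with hhdef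
        have hx : x = xstar + h := by rw [hhdef]; abel
        set w : Fin m → ℝ := Cᵀ *ᵥ (h : Fin n → ℝ) with hwdef
        have hM : ∀ u : Fin m → ℝ, (1/2) * (u ⬝ᵥ (B *ᵥ u)) + w ⬝ᵥ u
            ≤ c - quadGame A B C a b c₀ xstar ystar
              - (1/2) * ((h : Fin n → ℝ) ⬝ᵥ (A *ᵥ (h : Fin n → ℝ))) := by
          intro u
          have h1 := hc (ystar + (WithLp.toLp 2 (u) : EuclideanSpace ℝ (Fin m)))
          rw [hx, quadGame_expand A B C a b c₀ hA hB xstar h ystar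
            (WithLp.toLp 2 (u) : EuclideanSpace ℝ (Fin m)), hdzero, hgzero,
            zero_dotProduct, zero_dotProduct, QG_dp_transfer C] at h1
          linarith
        obtain ⟨v, hv⟩ := QG_exists_solution hB w _ hM
        obtain ⟨δ, hδ0, hδ⟩ := hlocx 0
        have hnh0 : 0 ≤ ‖h‖ := norm_nonneg _
        have hnv0 : 0 ≤ ‖(WithLp.toLp 2 (v) : EuclideanSpace ℝ (Fin m))‖ := norm_nonneg _
        set t : ℝ := min (δ/(‖h‖+1))
          ((εs 0)/(‖(WithLp.toLp 2 (v) : EuclideanSpace ℝ (Fin m))‖+1)) with htdef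
        have ht0 : 0 < t := lt_min (by positivity) (div_pos (hεpos 0) (by positivity))
        have hδh : ‖(xstar + t • h) - xstar‖ ≤ δ := by
          rw [add_sub_cancel_left, norm_smul, Real.norm_eq_abs, abs_of_pos ht0]
          have hcancel : (δ/(‖h‖+1)) * (‖h‖+1) = δ := div_mul_cancel₀ _ (by positivity)
          nlinarith [min_le_left (δ/(‖h‖+1))
              ((εs 0)/(‖(WithLp.toLp 2 (v) : EuclideanSpace ℝ (Fin m))‖+1)),
            mul_le_mul_of_nonneg_right
              (min_le_left (δ/(‖h‖+1))
                ((εs 0)/(‖(WithLp.toLp 2 (v) : EuclideanSpace ℝ (Fin m))‖+1)))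
              (by positivity : (0:ℝ) ≤ ‖h‖+1)]
        have hlow : ((quadGame A B C a b c₀ xstar ystar : ℝ) : EReal)
            ≤ envU (quadGame A B C a b c₀) ystar (εs 0) xstar :=
          QG_le_envU (by rw [sub_self, norm_zero]; exact (hεpos 0).le)
        have hupp : envU (quadGame A B C a b c₀) ystar (εs 0) (xstar + t • h)
            ≤ ((quadGame A B C a b c₀ xstar ystar
                + t^2 * ((1/2) * ((h : Fin n → ℝ) ⬝ᵥ (A *ᵥ (h : Fin n → ℝ)))
                  - (1/2) * (v ⬝ᵥ w)) : ℝ) : EReal) := by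
          apply QG_envU_le
          intro y hyb
          have e := quadGame_expand A B C a b c₀ hA hB xstar (t • h) ystar (y - ystar)
          rw [show ystar + (y - ystar) = y from by abel] at e
          rw [e, hdzero, hgzero, zero_dotProduct, zero_dotProduct]
          have hq2 : ((t • h : EuclideanSpace ℝ (Fin n)) : Fin n → ℝ)
                ⬝ᵥ (A *ᵥ ((t • h : EuclideanSpace ℝ (Fin n)) : Fin n → ℝ))
              = t^2 * ((h : Fin n → ℝ) ⬝ᵥ (A *ᵥ (h : Fin n → ℝ))) := by
            show (t • (h : Fin n → ℝ)) ⬝ᵥ (A *ᵥ (t • (h : Fin n → ℝ))) = _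
            rw [mulVec_smul, dotProduct_smul, smul_dotProduct]
            simp only [smul_eq_mul]
            ring
          have hcross : ((t • h : EuclideanSpace ℝ (Fin n)) : Fin n → ℝ)
                ⬝ᵥ (C *ᵥ (WithLp.ofLp (y - ystar)))
              = (t • w) ⬝ᵥ (WithLp.ofLp (y - ystar)) := by
            rw [QG_dp_transfer]
            congr 1
            show Cᵀ *ᵥ (t • (h : Fin n → ℝ)) = t • w
            rw [mulVec_smul, hwdef]
          have hw2 : B *ᵥ (t • v) = t • w := by rw [mulVec_smul, hv]
          have hsq := QG_sq_complete hB hBneg hw2 (WithLp.ofLp (y - ystar))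
          have hvw : (t • v) ⬝ᵥ (t • w) = t^2 * (v ⬝ᵥ w) := by
            rw [dotProduct_smul, smul_dotProduct]
            simp only [smul_eq_mul]
            ring
          rw [hq2, hcross]
          rw [hvw] at hsq
          linarith
        have hchain := le_trans hlow (le_trans (hδ _ hδh) hupp)
        rw [EReal.coe_le_coe_iff] at hchain
        have hX : 0 ≤ (1/2) * ((h : Fin n → ℝ) ⬝ᵥ (A *ᵥ (h : Fin n → ℝ)))
            - (1/2) * (v ⬝ᵥ w) := by
          by_contra hneg
          push_neg at hneg
          nlinarith [mul_pos (pow_pos ht0 2) (neg_pos.mpr hneg)]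
        have h1 := hc (ystar + (WithLp.toLp 2 ((-v)) : EuclideanSpace ℝ (Fin m)))
        rw [hx, quadGame_expand A B C a b c₀ hA hB xstar h ystar
          (WithLp.toLp 2 ((-v)) : EuclideanSpace ℝ (Fin m)), hdzero, hgzero,
          zero_dotProduct, zero_dotProduct, QG_dp_transfer C] at h1
        have c1 : ((WithLp.toLp 2 ((-v)) : EuclideanSpace ℝ (Fin m)) : Fin m → ℝ)
              ⬝ᵥ (B *ᵥ ((WithLp.toLp 2 ((-v)) : EuclideanSpace ℝ (Fin m)) : Fin m → ℝ))
            = v ⬝ᵥ w := by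
          show (-v) ⬝ᵥ (B *ᵥ (-v)) = v ⬝ᵥ w
          rw [mulVec_neg, dotProduct_neg, neg_dotProduct, neg_neg, hv]
        have c2 : (Cᵀ *ᵥ (h : Fin n → ℝ))
              ⬝ᵥ ((WithLp.toLp 2 ((-v)) : EuclideanSpace ℝ (Fin m)) : Fin m → ℝ)
            = -(v ⬝ᵥ w) := by
          show w ⬝ᵥ (-v) = -(v ⬝ᵥ w)
          rw [dotProduct_neg, dotProduct_comm]
        rw [c1, c2] at h1
        linarith
      exact ⟨⟨hdzero, hgzero⟩, hglob1, hglob2⟩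
    · rintro ⟨⟨hd, hg⟩, hg1, hg2⟩
      have hBneg : ∀ u : Fin m → ℝ, u ⬝ᵥ (B *ᵥ u) ≤ 0 := by
        intro u
        have h1 := hg1 (ystar + (WithLp.toLp 2 (u) : EuclideanSpace ℝ (Fin m)))
        rw [quadGame_expand_y A B C a b c₀ hB xstar ystar
          (WithLp.toLp 2 (u) : EuclideanSpace ℝ (Fin m)), hg, zero_dotProduct] at h1
        linarith
      constructor
      · exact ⟨1, one_pos, fun y _ => hg1 y⟩
      · refine ⟨fun k => 1/((k:ℝ)+1), fun k => by positivity,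
          tendsto_one_div_add_atTop_nhds_zero_nat, ?_⟩
        intro k
        have hεpos : (0:ℝ) < 1/((k:ℝ)+1) := by positivity
        have HQ : ∀ (h : EuclideanSpace ℝ (Fin n)) (v : Fin m → ℝ),
            B *ᵥ v = Cᵀ *ᵥ h →
            0 ≤ (1/2) * (h ⬝ᵥ (A *ᵥ h)) - (1/2) * (v ⬝ᵥ (Cᵀ *ᵥ h)) := by
          intro h v hBv
          have hc : ∀ y, quadGame A B C a b c₀ (xstar + h) y ≤
              quadGame A B C a b c₀ xstar ystar
                + ((1/2) * (h ⬝ᵥ (A *ᵥ h)) - (1/2) * (v ⬝ᵥ (Cᵀ *ᵥ h))) := by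
            intro y
            have e := quadGame_expand A B C a b c₀ hA hB xstar h ystar (y - ystar)
            rw [show ystar + (y - ystar) = y from by abel] at e
            rw [e, hd, hg, zero_dotProduct, zero_dotProduct]
            have hsq := QG_sq_complete hB hBneg hBv (WithLp.ofLp (y - ystar))
            have htr : (h : Fin n → ℝ) ⬝ᵥ (C *ᵥ (WithLp.ofLp (y - ystar)))
                = (Cᵀ *ᵥ (h : Fin n → ℝ)) ⬝ᵥ (WithLp.ofLp (y - ystar)) :=
              QG_dp_transfer C _ _
            rw [htr]
            linarith [hBneg (WithLp.ofLp (y - ystar))]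
          have := hg2 (xstar + h) _ hc
          linarith
        obtain ⟨δ, hδ0, hδ⟩ := QG_master A B C hB HQ hεpos
        refine ⟨δ, hδ0, ?_⟩
        intro x hx
        have e1 : envU (quadGame A B C a b c₀) ystar (1/((k:ℝ)+1)) xstar
            ≤ ((quadGame A B C a b c₀ xstar ystar : ℝ) : EReal) :=
          QG_envU_le (fun y _ => hg1 y)
        obtain ⟨u, hu, hval⟩ := hδ (x - xstar) hx
        have hqval : quadGame A B C a b c₀ xstar ystar ≤
            quadGame A B C a b c₀ x (ystar + u) := by
          have e := quadGame_expand A B C a b c₀ hA hB xstar (x - xstar) ystar u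
          rw [show xstar + (x - xstar) = x from by abel] at e
          rw [e, hd, hg, zero_dotProduct, zero_dotProduct]
          linarith
        have e2 : ((quadGame A B C a b c₀ xstar ystar : ℝ) : EReal)
            ≤ envU (quadGame A B C a b c₀) ystar (1/((k:ℝ)+1)) x := by
          refine le_trans ?_ (QG_le_envU (y := ystar + u)
            (by rw [add_sub_cancel_left]; exact hu))
          exact_mod_cast hqval
        exact le_trans e1 e2
  exact ⟨main, fun hl => (main.mp hl).2⟩
end
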